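/- arXiv:1902.02329 — 5 statements merged into one kernel-verified Lean document; each statement's English description precedes it below -/
import Mathlib

section
/- Let p ∈ (0,1] ∪ [2,∞), let (X, 𝒜, μ) be a measure space and let (f_j)_{j≥1} be a sequence of measurable functions f_j : X → [0,∞). Then ∫ (∑_j f_j)^p dμ ≥ ∑_j ∫ f_j^p dμ + (2^p − 2) · ∑_{i<j} ∫ (f_i f_j)^{p/2} dμ, where the sums on the right range over all j ≥ 1 and all pairs i < j, and both sides are interpreted in [0,∞] (for p ∈ (0,1] note 2^p − 2 ≤ 0, so the right-hand side is interpreted as a difference of two finite quantities whenever they are finite, and the inequality is asserted in that case; for p ≥ 2 both sides lie in [0,∞]). -/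
open MeasureTheory Real Set Finset
open scoped ENNReal



/-- If `f 0 = 0` and `f` has nonnegative derivative on `[0,∞)`, then `f u ≥ 0` for `u ≥ 0`. -/
lemma nonneg_of_hasDerivAt {f f' : ℝ → ℝ} (hd : ∀ x, HasDerivAt f (f' x) x)
    (h0 : f 0 = 0) (hf' : ∀ x, 0 < x → 0 ≤ f' x) {u : ℝ} (hu : 0 ≤ u) : 0 ≤ f u := by
  have hmono : MonotoneOn f (Ici (0:ℝ)) := by
    apply monotoneOn_of_deriv_nonneg (convex_Ici 0)
      (fun x _ => (hd x).continuousAt.continuousWithinAt)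
      (fun x hx => ((hd x).differentiableAt.differentiableWithinAt))
    intro x hx
    rw [interior_Ici] at hx
    rw [(hd x).deriv]
    exact hf' x hx
  have := hmono (self_mem_Ici) hu hu
  rwa [h0] at this

lemma aux_exp_ineq {u : ℝ} (hu : 0 ≤ u) : 2 * (Real.exp u - 1) ≤ u * (Real.exp u + 1) := by
  have key : 0 ≤ u * Real.exp u + u - 2 * Real.exp u + 2 := by
    apply nonneg_of_hasDerivAt (f' := fun x => (x - 1) * Real.exp x + 1) (hu := hu)
    · intro x
      have h1 : HasDerivAt (fun x : ℝ => x * Real.exp x) (Real.exp x + x * Real.exp x) x := by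
        simpa using (hasDerivAt_id' x).fun_mul (Real.hasDerivAt_exp x)
      have h2 : HasDerivAt (fun x : ℝ => x * Real.exp x + x - 2 * Real.exp x + 2)
          ((Real.exp x + x * Real.exp x) + 1 - 2 * Real.exp x) x := by
        simpa using ((h1.add (hasDerivAt_id x)).sub ((Real.hasDerivAt_exp x).const_mul 2)).add_const 2
      convert h2 using 1; ring
    · simp
    · intro x hx
      have : 1 - x ≤ Real.exp (-x) := by have := Real.add_one_le_exp (-x); linarith
      have h3 : (1 - x) * Real.exp x ≤ 1 := by
        calc (1 - x) * Real.exp x ≤ Real.exp (-x) * Real.exp x := by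
              apply mul_le_mul_of_nonneg_right this (Real.exp_pos x).le
          _ = 1 := by rw [← Real.exp_add]; simp
      nlinarith [Real.exp_pos x]
  nlinarith

lemma log_ineq {s : ℝ} (hs : 0 < s) (hs1 : s ≤ 1) : 2 * (1 - s) ≤ (1 + s) * (-Real.log s) := by
  have hu : 0 ≤ -Real.log s := by
    simpa using Real.log_nonpos hs.le hs1
  have h := aux_exp_ineq hu
  rw [Real.exp_neg, Real.exp_log hs] at h
  have hs' : s ≠ 0 := hs.ne'
  have h2 : 2 * (s⁻¹ - 1) * s ≤ (-Real.log s) * (s⁻¹ + 1) * s := by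
    apply mul_le_mul_of_nonneg_right h hs.le
  have h3 : s⁻¹ * s = 1 := inv_mul_cancel₀ hs'
  calc 2 * (1 - s) = 2 * (s⁻¹ - 1) * s := by rw [mul_assoc, sub_mul, h3]; ring
    _ ≤ (-Real.log s) * (s⁻¹ + 1) * s := h2
    _ = (1 + s) * (-Real.log s) := by rw [mul_assoc, add_mul, h3]; ring


lemma K_lower {s : ℝ} (hs : 0 < s) (hs1 : s ≤ 1)
    (hlog : 2 * (1 - s) ≤ (1 + s) * (-Real.log s))
    {p : ℝ} (hp1 : p ≤ 1) :
    3 - s ≤ s ^ (p - 1) * (1 + s) + 2 ^ p * (1 - s) := by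
  set K : ℝ → ℝ := fun q => Real.exp ((q - 1) * Real.log s) * (1 + s)
    + Real.exp (q * Real.log 2) * (1 - s) with hK
  have hd : ∀ q : ℝ, HasDerivAt K
      (Real.log s * Real.exp ((q - 1) * Real.log s) * (1 + s)
        + Real.log 2 * Real.exp (q * Real.log 2) * (1 - s)) q := by
    intro q
    have h1 : HasDerivAt (fun q : ℝ => (q - 1) * Real.log s) (Real.log s) q := by
      simpa using ((hasDerivAt_id q).sub_const 1).mul_const (Real.log s)
    have h2 : HasDerivAt (fun q : ℝ => q * Real.log 2) (Real.log 2) q := by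
      simpa using (hasDerivAt_id q).mul_const (Real.log 2)
    have := ((h1.exp.mul_const (1 + s)).fun_add (h2.exp.mul_const (1 - s)))
    exact this.congr_deriv (by ring)
  have hanti : AntitoneOn K (Iic (1:ℝ)) := by
    apply antitoneOn_of_deriv_nonpos (convex_Iic 1)
      (fun x _ => (hd x).continuousAt.continuousWithinAt)
      (fun x _ => ((hd x).differentiableAt.differentiableWithinAt))
    intro q hq
    rw [interior_Iic] at hq
    have hq1 : q < 1 := hq
    rw [(hd q).deriv]
    have hls : Real.log s ≤ 0 := Real.log_nonpos hs.le hs1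
    have hl2 : (0:ℝ) ≤ Real.log 2 := Real.log_nonneg one_le_two
    have hl2' : Real.log 2 ≤ 1 := by
      have := Real.log_le_sub_one_of_pos (by norm_num : (0:ℝ) < 2)
      linarith
    have he1 : (1:ℝ) ≤ Real.exp ((q - 1) * Real.log s) := by
      apply Real.one_le_exp
      have := mul_nonneg (by linarith : (0:ℝ) ≤ 1 - q) (by linarith : (0:ℝ) ≤ -Real.log s)
      nlinarith
    have he2 : Real.exp (q * Real.log 2) ≤ 2 := by
      calc Real.exp (q * Real.log 2) ≤ Real.exp (1 * Real.log 2) := by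
            apply Real.exp_le_exp.2
            apply mul_le_mul_of_nonneg_right hq1.le hl2
        _ = 2 := by rw [one_mul, Real.exp_log]; norm_num
    have key : Real.log 2 * Real.exp (q * Real.log 2) * (1 - s)
        ≤ Real.exp ((q - 1) * Real.log s) * ((1 + s) * (-Real.log s)) := by
      calc Real.log 2 * Real.exp (q * Real.log 2) * (1 - s) ≤ 1 * 2 * (1 - s) := by
            apply mul_le_mul_of_nonneg_right _ (by linarith)
            exact mul_le_mul hl2' he2 (Real.exp_pos _).le zero_le_one
        _ = 2 * (1 - s) := by ring
        _ ≤ (1 + s) * (-Real.log s) := hlog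
        _ ≤ Real.exp ((q - 1) * Real.log s) * ((1 + s) * (-Real.log s)) := by
            apply le_mul_of_one_le_left _ he1
            apply mul_nonneg (by linarith) (by linarith)
    nlinarith [key]
  have hKp : K 1 ≤ K p := hanti (mem_Iic.2 hp1) (mem_Iic.2 le_rfl) hp1
  have hK1 : K 1 = 3 - s := by
    simp only [hK, sub_self, zero_mul, Real.exp_zero, one_mul, Real.exp_log (by norm_num : (0:ℝ) < 2)]
    ring
  have hKpv : K p = s ^ (p - 1) * (1 + s) + 2 ^ p * (1 - s) := by
    simp only [hK]
    rw [Real.rpow_def_of_pos hs, Real.rpow_def_of_pos (by norm_num : (0:ℝ) < 2),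
      mul_comm (Real.log s), mul_comm (Real.log 2)]
  rw [hK1, hKpv] at hKp
  linarith

lemma C1 {p : ℝ} (hp0 : 0 < p) (hp1 : p ≤ 1) {s : ℝ} (hs : 0 < s) (hs1 : s ≤ 1)
    (hlog : 2 * (1 - s) ≤ (1 + s) * (-Real.log s)) :
    1 - s ^ p ≤ (1 - s) * (1 + s) ^ (p - 1) := by
  have h1s : (0:ℝ) < 1 + s := by linarith
  -- chord inequality from concavity
  have hchord : (1 - s) * 1 + s * 2 ^ p ≤ (1 + s) ^ p := by
    rcases eq_or_lt_of_le hp1 with rfl | hplt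
    · simp [Real.rpow_one]; nlinarith
    · have hc := (Real.concaveOn_rpow hp0.le hp1).2 (mem_Ici.2 (zero_le_one))
        (mem_Ici.2 (by norm_num : (0:ℝ) ≤ 2)) (by linarith : (0:ℝ) ≤ 1 - s) hs.le (by ring)
      simp only [smul_eq_mul, Real.one_rpow] at hc
      exact hc.trans_eq (by congr 1; ring)
  have hK := K_lower hs hs1 hlog hp1
  -- multiply by s : s^p (1+s) ≥ (3-s) s - 2^p s (1-s)
  have hsp : s ^ (p - 1) * s = s ^ p := by
    rw [← Real.rpow_add_one hs.ne' (p-1)]; ring_nf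
  have hKs : (3 - s) * s ≤ s ^ p * (1 + s) + 2 ^ p * (1 - s) * s := by
    have := mul_le_mul_of_nonneg_right hK hs.le
    calc (3 - s) * s ≤ (s ^ (p - 1) * (1 + s) + 2 ^ p * (1 - s)) * s := this
      _ = s ^ p * (1 + s) + 2 ^ p * (1 - s) * s := by rw [← hsp]; ring
  -- conclude (1 - s^p)(1+s) ≤ (1-s)(1+s)^p
  have hmain : (1 - s ^ p) * (1 + s) ≤ (1 - s) * (1 + s) ^ p := by
    nlinarith [hchord, hKs, mul_le_mul_of_nonneg_left hchord (by linarith : (0:ℝ) ≤ 1 - s)]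
  have hfin : (1 - s) * (1 + s) ^ (p - 1) = (1 - s) * (1 + s) ^ p / (1 + s) := by
    rw [Real.rpow_sub h1s, Real.rpow_one]; ring
  rw [hfin, le_div_iff₀ h1s]
  linarith [hmain]


section Deriv

variable {p : ℝ}

/-- the common core: `1 - s^p ≤ (1-s)(1+s)^(p-1)` for `s ∈ (0,1]`, in either exponent range. -/
lemma deriv_ineq_of_core (hp0 : 0 < p)
    (hcore : ∀ s : ℝ, 0 < s → s ≤ 1 → 1 - s ^ p ≤ (1 - s) * (1 + s) ^ (p - 1))
    {θ : ℝ} (hθ : 0 ≤ θ) :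
    Real.exp (p * θ) - Real.exp (-(p * θ))
      ≤ (Real.exp θ + Real.exp (-θ)) ^ (p - 1) * (Real.exp θ - Real.exp (-θ)) := by
  set s : ℝ := Real.exp (-(2 * θ)) with hsdef
  have hs : 0 < s := Real.exp_pos _
  have hs1 : s ≤ 1 := Real.exp_le_one_iff.2 (by linarith)
  have hsum : Real.exp θ + Real.exp (-θ) = Real.exp θ * (1 + s) := by
    rw [mul_add, mul_one, hsdef, ← Real.exp_add]; ring_nf
  have hdiff : Real.exp θ - Real.exp (-θ) = Real.exp θ * (1 - s) := by
    rw [mul_sub, mul_one, hsdef, ← Real.exp_add]; ring_nf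
  have hsp : s ^ p = Real.exp (-(2 * θ)) ^ p := by rw [hsdef]
  have hsp' : s ^ p = Real.exp (-(2 * θ) * p) := by rw [hsp, ← Real.exp_mul]
  have hLHS : Real.exp (p * θ) - Real.exp (-(p * θ)) = Real.exp (p * θ) * (1 - s ^ p) := by
    rw [hsp', mul_sub, mul_one, ← Real.exp_add]; ring_nf
  have hRHS : (Real.exp θ + Real.exp (-θ)) ^ (p - 1) * (Real.exp θ - Real.exp (-θ))
      = Real.exp (p * θ) * ((1 - s) * (1 + s) ^ (p - 1)) := by
    rw [hsum, hdiff, Real.mul_rpow (Real.exp_pos θ).le (by positivity), ← Real.exp_mul]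
    rw [show Real.exp (θ * (p-1)) * (1+s)^(p-1) * (Real.exp θ * (1-s))
        = (Real.exp (θ * (p-1)) * Real.exp θ) * ((1-s)*(1+s)^(p-1)) from by ring, ← Real.exp_add]
    ring_nf
  rw [hLHS, hRHS]
  exact mul_le_mul_of_nonneg_left (hcore s hs hs1) (Real.exp_pos _).le

lemma core_of_le_one (hp0 : 0 < p) (hp1 : p ≤ 1) :
    ∀ s : ℝ, 0 < s → s ≤ 1 → 1 - s ^ p ≤ (1 - s) * (1 + s) ^ (p - 1) :=
  fun s hs hs1 => C1 hp0 hp1 hs hs1 (log_ineq hs hs1)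

lemma core_of_two_le (hp2 : 2 ≤ p) :
    ∀ s : ℝ, 0 < s → s ≤ 1 → 1 - s ^ p ≤ (1 - s) * (1 + s) ^ (p - 1) := by
  intro s hs hs1
  have hp1 : (1:ℝ) ≤ p - 1 := by linarith
  -- Bernoulli
  have hbern : 1 + (p - 1) * s ≤ (1 + s) ^ (p - 1) :=
    one_add_mul_self_le_rpow_one_add (by linarith) hp1
  -- weighted AM-GM : (p-1) s^2 ≤ (p-2) s + s^p
  have hamgm : (p - 1) * (s * s) ≤ (p - 2) * s + s ^ p := by
    have hne : p - 1 ≠ 0 := by linarith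
    have hw : (p - 2) / (p - 1) + 1 / (p - 1) = 1 := by field_simp; ring
    have h := Real.geom_mean_le_arith_mean2_weighted
      (div_nonneg (by linarith) (by linarith)) (div_nonneg zero_le_one (by linarith))
      hs.le (Real.rpow_nonneg hs.le p) hw
    have hid : s ^ ((p - 2) / (p - 1)) * (s ^ p) ^ (1 / (p - 1)) = s * s := by
      rw [← Real.rpow_mul hs.le, ← Real.rpow_add hs,
        show (p - 2) / (p - 1) + p * (1 / (p - 1)) = 2 from by field_simp; ring,
        show (2:ℝ) = ((2:ℕ):ℝ) from by norm_num, Real.rpow_natCast]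
      ring
    rw [hid] at h
    have h2 := mul_le_mul_of_nonneg_left h (by linarith : (0:ℝ) ≤ p - 1)
    calc (p - 1) * (s * s) ≤ (p - 1) * ((p - 2) / (p - 1) * s + 1 / (p - 1) * s ^ p) := h2
      _ = (p - 2) * s + s ^ p := by field_simp
  have h1 : 1 - s ^ p ≤ (1 - s) * (1 + (p - 1) * s) := by nlinarith
  calc 1 - s ^ p ≤ (1 - s) * (1 + (p - 1) * s) := h1
    _ ≤ (1 - s) * (1 + s) ^ (p - 1) :=
        mul_le_mul_of_nonneg_left hbern (by linarith)

/-- Monotonicity of `F θ = (e^θ+e^{-θ})^p - e^{pθ} - e^{-pθ}` gives the normalized inequality. -/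
lemma exp_ineq_of_core (hp0 : 0 < p)
    (hcore : ∀ s : ℝ, 0 < s → s ≤ 1 → 1 - s ^ p ≤ (1 - s) * (1 + s) ^ (p - 1))
    {θ : ℝ} (hθ : 0 ≤ θ) :
    2 ^ p - 2 + Real.exp (p * θ) + Real.exp (-(p * θ))
      ≤ (Real.exp θ + Real.exp (-θ)) ^ p := by
  set F : ℝ → ℝ := fun t => (Real.exp t + Real.exp (-t)) ^ p
    - Real.exp (p * t) - Real.exp (-(p * t)) with hF
  have hgpos : ∀ t : ℝ, 0 < Real.exp t + Real.exp (-t) := fun t => by positivity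
  have hd : ∀ t : ℝ, HasDerivAt F
      (p * (Real.exp t + Real.exp (-t)) ^ (p - 1) * (Real.exp t - Real.exp (-t))
        - Real.exp (p * t) * p - Real.exp (-(p * t)) * (-p)) t := by
    intro t
    have h1 : HasDerivAt (fun t : ℝ => Real.exp t + Real.exp (-t))
        (Real.exp t - Real.exp (-t)) t := by
      have := (Real.hasDerivAt_exp t).fun_add (((hasDerivAt_id t).neg).exp)
      exact this.congr_deriv (by simp [sub_eq_add_neg])
    have h2 := h1.rpow_const (p := p) (Or.inl (hgpos t).ne')
    have h3 : HasDerivAt (fun t : ℝ => Real.exp (p * t)) (Real.exp (p * t) * p) t := by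
      simpa using (((hasDerivAt_id t).const_mul p).exp)
    have h4 : HasDerivAt (fun t : ℝ => Real.exp (-(p * t))) (Real.exp (-(p * t)) * (-p)) t := by
      simpa using ((((hasDerivAt_id t).const_mul p).neg).exp)
    exact ((h2.fun_sub h3).fun_sub h4).congr_deriv (by ring)
  have hmono : MonotoneOn F (Ici (0:ℝ)) := by
    apply monotoneOn_of_deriv_nonneg (convex_Ici 0)
      (fun t _ => (hd t).continuousAt.continuousWithinAt)
      (fun t _ => (hd t).differentiableAt.differentiableWithinAt)
    intro t ht
    rw [interior_Ici] at ht
    rw [(hd t).deriv]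
    have key := deriv_ineq_of_core hp0 hcore (le_of_lt ht)
    nlinarith [key, hp0]
  have h0 : F 0 = 2 ^ p - 2 := by
    simp only [hF, Real.exp_zero, neg_zero, mul_zero]
    norm_num
    ring
  have := hmono self_mem_Ici (mem_Ici.2 hθ) hθ
  rw [h0] at this
  simp only [hF] at this
  linarith

end Deriv


section TwoVar
variable {p : ℝ}

lemma two_var_pos (hp0 : 0 < p)
    (hco : ∀ θ : ℝ, 0 ≤ θ → 2 ^ p - 2 + Real.exp (p * θ) + Real.exp (-(p * θ))
      ≤ (Real.exp θ + Real.exp (-θ)) ^ p)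
    {x y : ℝ} (hx : 0 < x) (hy : 0 < y) (hyx : y ≤ x) :
    x ^ p + y ^ p + (2 ^ p - 2) * (x * y) ^ (p / 2) ≤ (x + y) ^ p := by
  set θ : ℝ := (Real.log x - Real.log y) / 2 with hθdef
  have hθ : 0 ≤ θ := by
    have := Real.log_le_log hy hyx
    rw [hθdef]; linarith
  set m : ℝ := Real.exp ((Real.log x + Real.log y) / 2) with hmdef
  have hm : 0 < m := Real.exp_pos _
  have hxm : m * Real.exp θ = x := by
    rw [hmdef, hθdef, ← Real.exp_add, show (Real.log x + Real.log y)/2 + (Real.log x - Real.log y)/2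
      = Real.log x from by ring, Real.exp_log hx]
  have hym : m * Real.exp (-θ) = y := by
    rw [hmdef, hθdef, ← Real.exp_add, show (Real.log x + Real.log y)/2 + -((Real.log x - Real.log y)/2)
      = Real.log y from by ring, Real.exp_log hy]
  have hmp : m ^ p = (x * y) ^ (p / 2) := by
    rw [hmdef, ← Real.exp_mul, Real.rpow_def_of_pos (mul_pos hx hy),
      Real.log_mul hx.ne' hy.ne']
    ring_nf
  have hxp : x ^ p = m ^ p * Real.exp (p * θ) := by
    rw [← hxm, Real.mul_rpow hm.le (Real.exp_pos θ).le]
    congr 1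
    rw [← Real.exp_mul, mul_comm θ p]
  have hyp : y ^ p = m ^ p * Real.exp (-(p * θ)) := by
    rw [← hym, Real.mul_rpow hm.le (Real.exp_pos (-θ)).le]
    congr 1
    rw [← Real.exp_mul]
    congr 1
    ring
  have hsum : (x + y) ^ p = m ^ p * (Real.exp θ + Real.exp (-θ)) ^ p := by
    rw [← hxm, ← hym, ← mul_add, Real.mul_rpow hm.le (by positivity)]
  have h := mul_le_mul_of_nonneg_left (hco θ hθ) (Real.rpow_nonneg hm.le p)
  rw [hxp, hyp, hsum, ← hmp]
  nlinarith [h]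

lemma two_var (hp0 : 0 < p)
    (hco : ∀ θ : ℝ, 0 ≤ θ → 2 ^ p - 2 + Real.exp (p * θ) + Real.exp (-(p * θ))
      ≤ (Real.exp θ + Real.exp (-θ)) ^ p)
    {x y : ℝ} (hx : 0 ≤ x) (hy : 0 ≤ y) :
    x ^ p + y ^ p + (2 ^ p - 2) * (x * y) ^ (p / 2) ≤ (x + y) ^ p := by
  have hp2 : p / 2 ≠ 0 := by positivity
  rcases eq_or_lt_of_le hx with rfl | hx'
  · simp [Real.zero_rpow hp0.ne', Real.zero_rpow hp2]
  rcases eq_or_lt_of_le hy with rfl | hy'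
  · simp [Real.zero_rpow hp0.ne', Real.zero_rpow hp2]
  rcases le_total y x with h | h
  · exact two_var_pos hp0 hco hx' hy' h
  · have := two_var_pos hp0 hco hy' hx' h
    rw [mul_comm y x, add_comm y x] at this
    linarith
end TwoVar

lemma real_ineq {p : ℝ} (hp : p ∈ Set.Ioc (0 : ℝ) 1 ∪ Set.Ici (2 : ℝ)) :
    ∀ x y : ℝ, 0 ≤ x → 0 ≤ y →
      x ^ p + y ^ p + ((2:ℝ) ^ p - 2) * (x * y) ^ (p / 2) ≤ (x + y) ^ p := by
  intro x y hx hy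
  rcases hp with h | h
  · exact two_var h.1 (fun θ hθ => exp_ineq_of_core h.1 (core_of_le_one h.1 h.2) hθ) hx hy
  · have h2 : (2:ℝ) ≤ p := h
    have hp0 : 0 < p := by linarith
    exact two_var hp0 (fun θ hθ => exp_ineq_of_core hp0 (core_of_two_le h2) hθ) hx hy



section ENN
variable {p : ℝ}

/-- transfer the real two-variable inequality to `ℝ≥0∞`, `p ≥ 2` shape -/
lemma enn_two_ge (hp0 : 0 < p) (hc : 0 ≤ (2:ℝ) ^ p - 2)
    (hreal : ∀ x y : ℝ, 0 ≤ x → 0 ≤ y →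
      x ^ p + y ^ p + ((2:ℝ) ^ p - 2) * (x * y) ^ (p / 2) ≤ (x + y) ^ p)
    (a b : ℝ≥0∞) :
    a ^ p + b ^ p + ENNReal.ofReal ((2:ℝ) ^ p - 2) * (a * b) ^ (p / 2) ≤ (a + b) ^ p := by
  by_cases ha : a = ⊤
  · rw [ha, top_add, ENNReal.top_rpow_of_pos hp0]; exact le_top
  by_cases hb : b = ⊤
  · rw [hb, add_top, ENNReal.top_rpow_of_pos hp0]; exact le_top
  have hx0 : 0 ≤ a.toReal := ENNReal.toReal_nonneg
  have hy0 : 0 ≤ b.toReal := ENNReal.toReal_nonneg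
  rw [← ENNReal.ofReal_toReal ha, ← ENNReal.ofReal_toReal hb,
    ← ENNReal.ofReal_mul hx0, ← ENNReal.ofReal_add hx0 hy0,
    ENNReal.ofReal_rpow_of_nonneg hx0 hp0.le,
    ENNReal.ofReal_rpow_of_nonneg hy0 hp0.le,
    ENNReal.ofReal_rpow_of_nonneg (mul_nonneg hx0 hy0) (by positivity),
    ENNReal.ofReal_rpow_of_nonneg (add_nonneg hx0 hy0) hp0.le,
    ← ENNReal.ofReal_mul hc, ← ENNReal.ofReal_add (by positivity) (by positivity),
    ← ENNReal.ofReal_add (by positivity) (by positivity)]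
  exact ENNReal.ofReal_le_ofReal (hreal _ _ hx0 hy0)

/-- transfer, `p ≤ 1` shape -/
lemma enn_two_le (hp0 : 0 < p) (hd : 0 ≤ 2 - (2:ℝ) ^ p)
    (hreal : ∀ x y : ℝ, 0 ≤ x → 0 ≤ y →
      x ^ p + y ^ p + ((2:ℝ) ^ p - 2) * (x * y) ^ (p / 2) ≤ (x + y) ^ p)
    (a b : ℝ≥0∞) :
    a ^ p + b ^ p ≤ (a + b) ^ p + ENNReal.ofReal (2 - (2:ℝ) ^ p) * (a * b) ^ (p / 2) := by
  by_cases ha : a = ⊤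
  · rw [ha, top_add, ENNReal.top_rpow_of_pos hp0]; simp
  by_cases hb : b = ⊤
  · rw [hb, add_top, ENNReal.top_rpow_of_pos hp0]; simp
  have hx0 : 0 ≤ a.toReal := ENNReal.toReal_nonneg
  have hy0 : 0 ≤ b.toReal := ENNReal.toReal_nonneg
  rw [← ENNReal.ofReal_toReal ha, ← ENNReal.ofReal_toReal hb,
    ← ENNReal.ofReal_mul hx0, ← ENNReal.ofReal_add hx0 hy0,
    ENNReal.ofReal_rpow_of_nonneg hx0 hp0.le,
    ENNReal.ofReal_rpow_of_nonneg hy0 hp0.le,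
    ENNReal.ofReal_rpow_of_nonneg (mul_nonneg hx0 hy0) (by positivity),
    ENNReal.ofReal_rpow_of_nonneg (add_nonneg hx0 hy0) hp0.le,
    ← ENNReal.ofReal_mul hd, ← ENNReal.ofReal_add (by positivity) (by positivity),
    ← ENNReal.ofReal_add (by positivity) (by positivity)]
  apply ENNReal.ofReal_le_ofReal
  have := hreal _ _ hx0 hy0
  nlinarith [this]

/-- superadditivity of `x ↦ x^q`, `q ≥ 1`, over finsets -/
lemma finset_rpow_super {q : ℝ} (hq : 1 ≤ q) {ι : Type*} (s : Finset ι) (g : ι → ℝ≥0∞) :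
    ∑ i ∈ s, g i ^ q ≤ (∑ i ∈ s, g i) ^ q := by
  classical
  induction s using Finset.cons_induction with
  | empty => simp [ENNReal.zero_rpow_of_pos (by linarith : (0:ℝ) < q)]
  | cons a s ha ih =>
      rw [Finset.sum_cons, Finset.sum_cons]
      calc g a ^ q + ∑ i ∈ s, g i ^ q ≤ g a ^ q + (∑ i ∈ s, g i) ^ q := by gcongr
        _ ≤ (g a + ∑ i ∈ s, g i) ^ q := ENNReal.add_rpow_le_rpow_add _ _ hq

lemma finset_rpow_sub {q : ℝ} (hq0 : 0 < q) (hq : q ≤ 1) {ι : Type*} (s : Finset ι)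
    (g : ι → ℝ≥0∞) : (∑ i ∈ s, g i) ^ q ≤ ∑ i ∈ s, g i ^ q := by
  classical
  induction s using Finset.cons_induction with
  | empty => simp [ENNReal.zero_rpow_of_pos hq0]
  | cons a s ha ih =>
      rw [Finset.sum_cons, Finset.sum_cons]
      calc (g a + ∑ i ∈ s, g i) ^ q ≤ g a ^ q + (∑ i ∈ s, g i) ^ q :=
            ENNReal.rpow_add_le_add_rpow _ _ hq0.le hq
        _ ≤ g a ^ q + ∑ i ∈ s, g i ^ q := by gcongr

lemma tsum_rpow_sub {q : ℝ} (hq0 : 0 < q) (hq : q ≤ 1) (g : ℕ → ℝ≥0∞) :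
    (∑' i, g i) ^ q ≤ ∑' i, g i ^ q := by
  have hmono : Monotone (fun x : ℝ≥0∞ => x ^ q) := fun _ _ h => ENNReal.rpow_le_rpow h hq0.le
  have hmap : (∑' i, g i) ^ q = ⨆ s : Finset ℕ, (∑ i ∈ s, g i) ^ q := by
    rw [ENNReal.tsum_eq_iSup_sum]
    exact Monotone.map_iSup_of_continuousAt
      (ENNReal.continuous_rpow_const.continuousAt) hmono
      (by simp [ENNReal.zero_rpow_of_pos hq0])
  rw [hmap]
  apply iSup_le
  intro s
  exact le_trans (finset_rpow_sub hq0 hq s g) (ENNReal.sum_le_tsum s)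

end ENN


section Point
variable {p : ℝ}

/-- cross-term partial sums -/
noncomputable def crossSum (p : ℝ) (g : ℕ → ℝ≥0∞) (n : ℕ) : ℝ≥0∞ :=
  ∑ j ∈ range n, ∑ i ∈ range j, (g i * g j) ^ (p / 2)

lemma cross_mul {q : ℝ} (hq : 0 ≤ q) (g : ℕ → ℝ≥0∞) (n : ℕ) :
    ∑ i ∈ range n, (g i * g n) ^ q = (∑ i ∈ range n, g i ^ q) * g n ^ q := by
  rw [Finset.sum_mul]
  exact Finset.sum_congr rfl fun i _ => ENNReal.mul_rpow_of_nonneg _ _ hq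

lemma fin_ge2 (hp0 : 0 < p) (hp2 : 2 ≤ p)
    (hreal : ∀ x y : ℝ, 0 ≤ x → 0 ≤ y →
      x ^ p + y ^ p + ((2:ℝ) ^ p - 2) * (x * y) ^ (p / 2) ≤ (x + y) ^ p)
    (g : ℕ → ℝ≥0∞) (n : ℕ) :
    ∑ i ∈ range n, g i ^ p + ENNReal.ofReal ((2:ℝ) ^ p - 2) * crossSum p g n
      ≤ (∑ i ∈ range n, g i) ^ p := by
  have hc : (0:ℝ) ≤ 2 ^ p - 2 := by
    have : (2:ℝ) ^ (1:ℝ) ≤ 2 ^ p := Real.rpow_le_rpow_of_exponent_le one_le_two (by linarith)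
    rw [Real.rpow_one] at this; linarith
  set c := ENNReal.ofReal ((2:ℝ) ^ p - 2)
  induction n with
  | zero => simp [crossSum]
  | succ n ih =>
      rw [Finset.sum_range_succ, Finset.sum_range_succ,
        show crossSum p g (n+1) = crossSum p g n + ∑ i ∈ range n, (g i * g n) ^ (p/2) from
          Finset.sum_range_succ _ n]
      have key := enn_two_ge hp0 hc hreal (∑ i ∈ range n, g i) (g n)
      have hcross : (∑ i ∈ range n, g i) ^ (p/2) * g n ^ (p/2)
          ≥ (∑ i ∈ range n, g i ^ (p/2)) * g n ^ (p/2) := by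
        gcongr
        exact finset_rpow_super (by linarith) _ _
      calc ∑ i ∈ range n, g i ^ p + g n ^ p
            + c * (crossSum p g n + ∑ i ∈ range n, (g i * g n) ^ (p/2))
          = (∑ i ∈ range n, g i ^ p + c * crossSum p g n) + g n ^ p
            + c * ((∑ i ∈ range n, g i ^ (p/2)) * g n ^ (p/2)) := by
            rw [cross_mul (by positivity) g n]; ring
        _ ≤ (∑ i ∈ range n, g i) ^ p + g n ^ p
            + c * ((∑ i ∈ range n, g i) ^ (p/2) * g n ^ (p/2)) :=
            add_le_add (add_le_add ih le_rfl) (mul_le_mul_right hcross c)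
        _ = (∑ i ∈ range n, g i) ^ p + g n ^ p
            + c * ((∑ i ∈ range n, g i) * g n) ^ (p/2) := by
            rw [ENNReal.mul_rpow_of_nonneg _ _ (by positivity : (0:ℝ) ≤ p/2)]
        _ ≤ (∑ i ∈ range n, g i + g n) ^ p := key

lemma fin_le1 (hp0 : 0 < p) (hp1 : p ≤ 1)
    (hreal : ∀ x y : ℝ, 0 ≤ x → 0 ≤ y →
      x ^ p + y ^ p + ((2:ℝ) ^ p - 2) * (x * y) ^ (p / 2) ≤ (x + y) ^ p)
    (g : ℕ → ℝ≥0∞) (n : ℕ) :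
    ∑ i ∈ range n, g i ^ p
      ≤ (∑ i ∈ range n, g i) ^ p + ENNReal.ofReal (2 - (2:ℝ) ^ p) * crossSum p g n := by
  have hd : (0:ℝ) ≤ 2 - 2 ^ p := by
    have : (2:ℝ) ^ p ≤ 2 ^ (1:ℝ) := Real.rpow_le_rpow_of_exponent_le one_le_two hp1
    rw [Real.rpow_one] at this; linarith
  set d := ENNReal.ofReal (2 - (2:ℝ) ^ p)
  induction n with
  | zero => simp
  | succ n ih =>
      rw [Finset.sum_range_succ, Finset.sum_range_succ,
        show crossSum p g (n+1) = crossSum p g n + ∑ i ∈ range n, (g i * g n) ^ (p/2) from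
          Finset.sum_range_succ _ n]
      have key := enn_two_le hp0 hd hreal (∑ i ∈ range n, g i) (g n)
      have hcross : (∑ i ∈ range n, g i) ^ (p/2) * g n ^ (p/2)
          ≤ (∑ i ∈ range n, g i ^ (p/2)) * g n ^ (p/2) := by
        gcongr
        exact finset_rpow_sub (by positivity) (by linarith) _ _
      calc ∑ i ∈ range n, g i ^ p + g n ^ p
          ≤ ((∑ i ∈ range n, g i) ^ p + d * crossSum p g n) + g n ^ p := by gcongr
        _ ≤ ((∑ i ∈ range n, g i + g n) ^ p
              + d * ((∑ i ∈ range n, g i) * g n) ^ (p/2)) + d * crossSum p g n := by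
            have := key
            -- rearrange
            calc (∑ i ∈ range n, g i) ^ p + d * crossSum p g n + g n ^ p
                = ((∑ i ∈ range n, g i) ^ p + g n ^ p) + d * crossSum p g n := by ring
              _ ≤ ((∑ i ∈ range n, g i + g n) ^ p
                    + d * ((∑ i ∈ range n, g i) * g n) ^ (p/2)) + d * crossSum p g n := by
                  gcongr
        _ ≤ (∑ i ∈ range n, g i + g n) ^ p
              + d * (crossSum p g n + ∑ i ∈ range n, (g i * g n) ^ (p/2)) := by
            rw [ENNReal.mul_rpow_of_nonneg _ _ (by positivity : (0:ℝ) ≤ p/2), mul_add,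
              cross_mul (by positivity) g n]
            calc (∑ i ∈ range n, g i + g n) ^ p
                  + d * ((∑ i ∈ range n, g i) ^ (p/2) * g n ^ (p/2)) + d * crossSum p g n
                ≤ (∑ i ∈ range n, g i + g n) ^ p
                  + d * ((∑ i ∈ range n, g i ^ (p/2)) * g n ^ (p/2)) + d * crossSum p g n := by
                  gcongr
              _ = (∑ i ∈ range n, g i + g n) ^ p
                  + (d * crossSum p g n + d * ((∑ i ∈ range n, g i ^ (p/2)) * g n ^ (p/2))) := by
                  ring
              _ = _ := rfl

end Point




section T
variable {p : ℝ}

lemma crossSum_eq (p : ℝ) (g : ℕ → ℝ≥0∞) (n : ℕ) :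
    ∑ q ∈ range n ×ˢ range n, (if q.1 < q.2 then (g q.1 * g q.2) ^ (p / 2) else 0)
      = crossSum p g n := by
  rw [Finset.sum_product, Finset.sum_comm]
  apply Finset.sum_congr rfl
  intro j hj
  rw [Finset.mem_range] at hj
  rw [← Finset.sum_filter]
  have hfil : (range n).filter (fun i => i < j) = range j := by
    ext i
    simp only [Finset.mem_filter, Finset.mem_range]
    constructor
    · rintro ⟨_, h⟩; exact h
    · intro h; exact ⟨lt_trans h hj, h⟩
  rw [hfil]

lemma T_eq (p : ℝ) (g : ℕ → ℝ≥0∞) :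
    (∑' (i : ℕ) (j : ℕ), if i < j then (g i * g j) ^ (p / 2) else 0)
      = ⨆ n, crossSum p g n := by
  rw [← ENNReal.tsum_prod (f := fun i j => if i < j then (g i * g j) ^ (p / 2) else 0)]
  rw [ENNReal.tsum_eq_iSup_sum' (fun n => range n ×ˢ range n) ?_]
  · exact iSup_congr fun n => crossSum_eq p g n
  · intro t
    refine ⟨(t.sup fun q => max q.1 q.2) + 1, fun q hq => ?_⟩
    have h := Finset.le_sup (f := fun q : ℕ × ℕ => max q.1 q.2) hq
    rw [Finset.mem_product, Finset.mem_range, Finset.mem_range]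
    constructor
    · exact lt_of_le_of_lt (le_trans (le_max_left _ _) h) (Nat.lt_succ_self _)
    · exact lt_of_le_of_lt (le_trans (le_max_right _ _) h) (Nat.lt_succ_self _)

lemma monoA (g : ℕ → ℝ≥0∞) : Monotone fun n => ∑ i ∈ range n, g i ^ p :=
  fun _ _ h => Finset.sum_le_sum_of_subset (Finset.range_subset_range.2 h)

lemma monoC (g : ℕ → ℝ≥0∞) : Monotone (crossSum p g) :=
  fun _ _ h => Finset.sum_le_sum_of_subset (Finset.range_subset_range.2 h)

lemma point_ge2 (hp0 : 0 < p) (hp2 : 2 ≤ p)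
    (hreal : ∀ x y : ℝ, 0 ≤ x → 0 ≤ y →
      x ^ p + y ^ p + ((2:ℝ) ^ p - 2) * (x * y) ^ (p / 2) ≤ (x + y) ^ p)
    (g : ℕ → ℝ≥0∞) :
    ∑' j, g j ^ p + ENNReal.ofReal ((2:ℝ) ^ p - 2)
        * (∑' (i : ℕ) (j : ℕ), if i < j then (g i * g j) ^ (p / 2) else 0)
      ≤ (∑' j, g j) ^ p := by
  rw [T_eq p g, ENNReal.tsum_eq_iSup_nat (f := fun j => g j ^ p), ENNReal.mul_iSup,
    ENNReal.iSup_add_iSup_of_monotone (monoA g)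
      (fun a b h => mul_le_mul_right (monoC g h) _)]
  apply iSup_le
  intro n
  calc ∑ i ∈ range n, g i ^ p + ENNReal.ofReal ((2:ℝ) ^ p - 2) * crossSum p g n
      ≤ (∑ i ∈ range n, g i) ^ p := fin_ge2 hp0 hp2 hreal g n
    _ ≤ (∑' j, g j) ^ p := ENNReal.rpow_le_rpow (ENNReal.sum_le_tsum _) hp0.le

lemma point_le1 (hp0 : 0 < p) (hp1 : p ≤ 1)
    (hreal : ∀ x y : ℝ, 0 ≤ x → 0 ≤ y →
      x ^ p + y ^ p + ((2:ℝ) ^ p - 2) * (x * y) ^ (p / 2) ≤ (x + y) ^ p)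
    (g : ℕ → ℝ≥0∞) :
    ∑' j, g j ^ p
      ≤ (∑' j, g j) ^ p + ENNReal.ofReal (2 - (2:ℝ) ^ p)
          * (∑' (i : ℕ) (j : ℕ), if i < j then (g i * g j) ^ (p / 2) else 0) := by
  rw [ENNReal.tsum_eq_iSup_nat (f := fun j => g j ^ p)]
  apply iSup_le
  intro n
  calc ∑ i ∈ range n, g i ^ p
      ≤ (∑ i ∈ range n, g i) ^ p + ENNReal.ofReal (2 - (2:ℝ) ^ p) * crossSum p g n :=
        fin_le1 hp0 hp1 hreal g n
    _ ≤ _ := by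
        apply add_le_add
        · exact ENNReal.rpow_le_rpow (ENNReal.sum_le_tsum _) hp0.le
        · apply mul_le_mul_right
          rw [T_eq p g]
          exact le_iSup (crossSum p g) n

end T


/-- Corollary 2 (lower bound), for `p ∈ (0,1] ∪ [2,∞)`:
`‖∑_j f_j‖_p^p ≥ ∑_j ‖f_j‖_p^p + (2^p - 2) ∑_{i<j} ‖f_i f_j‖_{p/2}^{p/2}`.
For `p ∈ (0,1]` the coefficient `2^p - 2` is nonpositive, and following the statement the
right-hand side is interpreted as a difference of the two quantities whenever they are finite;
for `p ≥ 2` both sides are interpreted in `[0,∞]`. -/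
theorem statement12
    {X : Type*} [MeasurableSpace X] (μ : Measure X) (p : ℝ)
    (hp : p ∈ Set.Ioc (0 : ℝ) 1 ∪ Set.Ici (2 : ℝ))
    (f : ℕ → X → ℝ≥0∞) (hf : ∀ j, Measurable (f j)) (hffin : ∀ j x, f j x ≠ ∞) :
    (p ≤ 1 →
      (∑' j, ∫⁻ x, f j x ^ p ∂μ) ≠ ∞ →
      (∑' (i : ℕ) (j : ℕ), if i < j then ∫⁻ x, (f i x * f j x) ^ (p / 2) ∂μ else 0) ≠ ∞ →
      (∑' j, ∫⁻ x, f j x ^ p ∂μ).toReal +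
          ((2 : ℝ) ^ p - 2) *
            (∑' (i : ℕ) (j : ℕ),
              if i < j then ∫⁻ x, (f i x * f j x) ^ (p / 2) ∂μ else 0).toReal ≤
        (∫⁻ x, (∑' j, f j x) ^ p ∂μ).toReal) ∧
    (2 ≤ p →
      (∑' j, ∫⁻ x, f j x ^ p ∂μ) +
          ENNReal.ofReal ((2 : ℝ) ^ p - 2) *
            (∑' (i : ℕ) (j : ℕ),
              if i < j then ∫⁻ x, (f i x * f j x) ^ (p / 2) ∂μ else 0) ≤
        ∫⁻ x, (∑' j, f j x) ^ p ∂μ) := by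
  have hp0 : 0 < p := by
    rcases hp with h | h
    · exact h.1
    · have : (2:ℝ) ≤ p := h
      linarith
  have hreal := real_ineq hp
  -- measurability
  have hmeasp : ∀ j, Measurable fun x => f j x ^ p := fun j => (hf j).pow measurable_const
  have hmeascross : ∀ i j : ℕ,
      Measurable fun x => (if i < j then (f i x * f j x) ^ (p / 2) else 0 : ℝ≥0∞) := by
    intro i j
    by_cases h : i < j
    · simpa [h] using ((hf i).mul (hf j)).pow (measurable_const (a := p/2))
    · simpa [h] using measurable_const (a := (0:ℝ≥0∞)) (m := by infer_instance)
  have hmeasT : Measurable fun x =>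
      ∑' (i : ℕ) (j : ℕ), (if i < j then (f i x * f j x) ^ (p / 2) else 0 : ℝ≥0∞) :=
    Measurable.ennreal_tsum fun i => Measurable.ennreal_tsum fun j => hmeascross i j
  -- identification of A
  have hA : (∑' j, ∫⁻ x, f j x ^ p ∂μ) = ∫⁻ x, ∑' j, f j x ^ p ∂μ :=
    (lintegral_tsum fun j => (hmeasp j).aemeasurable).symm
  -- identification of B
  have hB : (∑' (i : ℕ) (j : ℕ), if i < j then ∫⁻ x, (f i x * f j x) ^ (p / 2) ∂μ else 0)
      = ∫⁻ x, ∑' (i : ℕ) (j : ℕ),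
          (if i < j then (f i x * f j x) ^ (p / 2) else 0 : ℝ≥0∞) ∂μ := by
    rw [lintegral_tsum fun i =>
      (Measurable.ennreal_tsum fun j => hmeascross i j).aemeasurable]
    apply tsum_congr
    intro i
    rw [lintegral_tsum fun j => (hmeascross i j).aemeasurable]
    apply tsum_congr
    intro j
    by_cases h : i < j
    · simp only [h, if_true]
    · simp only [h, if_false, lintegral_zero]
  constructor
  · -- p ≤ 1 case
    intro hp1 hAfin hBfin
    have hd : (0:ℝ) ≤ 2 - 2 ^ p := by
      have : (2:ℝ) ^ p ≤ 2 ^ (1:ℝ) := Real.rpow_le_rpow_of_exponent_le one_le_two hp1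
      rw [Real.rpow_one] at this; linarith
    have hCA : (∫⁻ x, (∑' j, f j x) ^ p ∂μ) ≤ ∑' j, ∫⁻ x, f j x ^ p ∂μ := by
      rw [hA]
      exact lintegral_mono fun x => tsum_rpow_sub hp0 hp1 fun j => f j x
    have hCfin : (∫⁻ x, (∑' j, f j x) ^ p ∂μ) ≠ ∞ := fun h => hAfin (top_le_iff.1 (h ▸ hCA))
    have hENN : (∑' j, ∫⁻ x, f j x ^ p ∂μ)
        ≤ (∫⁻ x, (∑' j, f j x) ^ p ∂μ) + ENNReal.ofReal (2 - 2 ^ p)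
            * (∑' (i : ℕ) (j : ℕ), if i < j then ∫⁻ x, (f i x * f j x) ^ (p / 2) ∂μ else 0) := by
      rw [hA, hB, ← lintegral_const_mul _ hmeasT,
        ← lintegral_add_left ((Measurable.ennreal_tsum hf).pow measurable_const)]
      exact lintegral_mono fun x => point_le1 hp0 hp1 hreal fun j => f j x
    have hdB_fin : ENNReal.ofReal (2 - 2 ^ p)
        * (∑' (i : ℕ) (j : ℕ), if i < j then ∫⁻ x, (f i x * f j x) ^ (p / 2) ∂μ else 0) ≠ ∞ :=
      ENNReal.mul_ne_top ENNReal.ofReal_ne_top hBfin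
    have htr := ENNReal.toReal_mono (ENNReal.add_ne_top.2 ⟨hCfin, hdB_fin⟩) hENN
    rw [ENNReal.toReal_add hCfin hdB_fin, ENNReal.toReal_mul,
      ENNReal.toReal_ofReal hd] at htr
    linarith
  · -- 2 ≤ p case
    intro hp2
    rw [hA, hB, ← lintegral_const_mul _ hmeasT,
      ← lintegral_add_left (Measurable.ennreal_tsum hmeasp)]
    exact lintegral_mono fun x => point_ge2 hp0 hp2 hreal fun j => f j x
end

section
/- Let p ∈ [1,2], let (X, 𝒜, μ) be a measure space and let (f_j)_{j≥1} be a sequence of measurable functions f_j : X → [0,∞). If ∑_j ∫ f_j^p dμ < ∞ and ∑_{i<j} ∫ (f_i f_j)^{p/2} dμ < ∞, then the function ∑_j f_j belongs to L^p(μ), i.e. ∫ (∑_j f_j)^p dμ < ∞. -/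
open MeasureTheory Real Set
open scoped ENNReal

lemma my_tsum_rpow_le {q : ℝ} (hq0 : 0 < q) (hq1 : q ≤ 1) (a : ℕ → ℝ≥0∞) :
    (∑' i, a i) ^ q ≤ ∑' i, a i ^ q := by
  have hfin : ∀ s : Finset ℕ, (∑ i ∈ s, a i) ^ q ≤ ∑ i ∈ s, a i ^ q := by
    intro s
    induction s using Finset.cons_induction with
    | empty => simp [ENNReal.zero_rpow_of_pos hq0]
    | cons i s hi ih =>
      rw [Finset.sum_cons, Finset.sum_cons]
      exact (ENNReal.rpow_add_le_add_rpow _ _ hq0.le hq1).trans (add_le_add_right ih _)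
  have hten : Filter.Tendsto (fun n => (∑ i ∈ Finset.range n, a i) ^ q)
      Filter.atTop (nhds ((∑' i, a i) ^ q)) :=
    (ENNReal.continuous_rpow_const.tendsto _).comp (ENNReal.tendsto_nat_tsum a)
  refine le_of_tendsto hten (Filter.Eventually.of_forall fun n => ?_)
  exact (hfin _).trans (ENNReal.sum_le_tsum _)

/-- For `p ∈ [1,2]`: if `∑_j ‖f_j‖_p^p < ∞` and `∑_{i<j} ‖f_i f_j‖_{p/2}^{p/2} < ∞`,
then `∑_j f_j ∈ L^p`, i.e. `∫ (∑_j f_j)^p dμ < ∞`. -/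
theorem statement13
    {X : Type*} [MeasurableSpace X] (μ : Measure X) (p : ℝ)
    (hp : p ∈ Set.Icc (1 : ℝ) 2)
    (f : ℕ → X → ℝ≥0∞) (hf : ∀ j, Measurable (f j)) (hffin : ∀ j x, f j x ≠ ∞)
    (h1 : (∑' j, ∫⁻ x, f j x ^ p ∂μ) ≠ ∞)
    (h2 : (∑' (i : ℕ) (j : ℕ),
        if i < j then ∫⁻ x, (f i x * f j x) ^ (p / 2) ∂μ else 0) ≠ ∞) :
    ∫⁻ x, (∑' j, f j x) ^ p ∂μ < ∞ := by
  obtain ⟨hp1, hp2⟩ := hp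
  set q : ℝ := p / 2 with hqdef
  have hq0 : 0 < q := by rw [hqdef]; linarith
  have hq1 : q ≤ 1 := by rw [hqdef]; linarith
  have hqq : q + q = p := by rw [hqdef]; ring
  -- pointwise bound
  have key : ∀ x, (∑' j, f j x) ^ p ≤ ∑' (i : ℕ) (j : ℕ), (f i x * f j x) ^ q := by
    intro x
    have e1 : (∑' j, f j x) ^ p = ((∑' j, f j x) ^ q) * ((∑' j, f j x) ^ q) := by
      rw [← ENNReal.rpow_add_of_nonneg q q hq0.le hq0.le, hqq]
    rw [e1]
    have hsub : (∑' j, f j x) ^ q ≤ ∑' j, f j x ^ q := my_tsum_rpow_le hq0 hq1 _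
    calc ((∑' j, f j x) ^ q) * ((∑' j, f j x) ^ q)
        ≤ (∑' j, f j x ^ q) * (∑' j, f j x ^ q) := mul_le_mul' hsub hsub
      _ = ∑' (i : ℕ) (j : ℕ), (f i x * f j x) ^ q := by
          rw [← ENNReal.tsum_mul_right]
          refine tsum_congr fun i => ?_
          rw [← ENNReal.tsum_mul_left]
          exact tsum_congr fun j => (ENNReal.mul_rpow_of_nonneg _ _ hq0.le).symm
  -- measurability
  have hmeas : ∀ i j : ℕ, Measurable fun x => (f i x * f j x) ^ q := fun i j =>
    ENNReal.continuous_rpow_const.measurable.comp ((hf i).mul (hf j))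
  set T : ℕ → ℕ → ℝ≥0∞ := fun i j => ∫⁻ x, (f i x * f j x) ^ q ∂μ with hT
  have step1 : ∫⁻ x, (∑' j, f j x) ^ p ∂μ ≤ ∑' (i : ℕ) (j : ℕ), T i j := by
    calc ∫⁻ x, (∑' j, f j x) ^ p ∂μ
        ≤ ∫⁻ x, ∑' (i : ℕ) (j : ℕ), (f i x * f j x) ^ q ∂μ := lintegral_mono key
      _ = ∑' (i : ℕ), ∫⁻ x, ∑' (j : ℕ), (f i x * f j x) ^ q ∂μ :=
          lintegral_tsum fun i =>
            (Measurable.ennreal_tsum fun j => hmeas i j).aemeasurable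
      _ = ∑' (i : ℕ) (j : ℕ), T i j := by
          exact tsum_congr fun i => lintegral_tsum fun j => (hmeas i j).aemeasurable
  -- symmetry of T
  have hTsymm : ∀ i j, T i j = T j i := fun i j => by
    simp only [hT]
    congr 1; funext x; rw [mul_comm]
  -- diagonal value
  have hTdiag : ∀ i, T i i = ∫⁻ x, f i x ^ p ∂μ := by
    intro i
    simp only [hT]
    congr 1; funext x
    rw [ENNReal.mul_rpow_of_nonneg _ _ hq0.le, ← ENNReal.rpow_add_of_nonneg q q hq0.le hq0.le, hqq]
  -- split the double sum
  have hsplit : (∑' (i : ℕ) (j : ℕ), T i j)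
      = (∑' (i : ℕ) (j : ℕ), if i = j then T i j else 0)
        + (∑' (i : ℕ) (j : ℕ), if i < j then T i j else 0)
        + (∑' (i : ℕ) (j : ℕ), if j < i then T i j else 0) := by
    rw [← ENNReal.tsum_add, ← ENNReal.tsum_add]
    refine tsum_congr fun i => ?_
    rw [← ENNReal.tsum_add, ← ENNReal.tsum_add]
    refine tsum_congr fun j => ?_
    rcases lt_trichotomy i j with h | h | h
    · simp [h, h.ne, lt_asymm h]
    · simp [h, lt_irrefl]
    · simp [h, h.ne', lt_asymm h]
  have hdiag : (∑' (i : ℕ) (j : ℕ), if i = j then T i j else 0)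
      = ∑' j, ∫⁻ x, f j x ^ p ∂μ := by
    refine tsum_congr fun i => ?_
    rw [← hTdiag i]
    calc (∑' (j : ℕ), if i = j then T i j else 0)
        = if i = i then T i i else 0 :=
          tsum_eq_single i fun j hj => if_neg fun h => hj h.symm
      _ = T i i := if_pos rfl
  have hlow : (∑' (i : ℕ) (j : ℕ), if j < i then T i j else 0)
      = ∑' (i : ℕ) (j : ℕ), if i < j then T i j else 0 := by
    rw [ENNReal.tsum_comm]
    refine tsum_congr fun i => tsum_congr fun j => ?_
    rw [hTsymm]
  have hup : (∑' (i : ℕ) (j : ℕ), if i < j then T i j else 0)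
      = ∑' (i : ℕ) (j : ℕ), if i < j then ∫⁻ x, (f i x * f j x) ^ (p / 2) ∂μ else 0 := rfl
  refine lt_of_le_of_lt step1 ?_
  rw [hsplit, hdiag, hlow, hup]
  exact ENNReal.add_lt_top.mpr ⟨ENNReal.add_lt_top.mpr ⟨h1.lt_top, h2.lt_top⟩, h2.lt_top⟩
end

section
/- Let p > 0 and let Ω := {(x,y,z) ∈ ℝ³ : x ≥ 0, y ≥ 0, 0 ≤ z ≤ √(xy)}. Let H : Ω → ℝ be continuous, concave on Ω, and positively one-homogeneous (H(λu) = λH(u) for λ ≥ 0, u ∈ Ω), and suppose H(x, y, √(xy)) = (x^{1/p} + y^{1/p})^p for all x, y > 0 and H(x, y, 0) = x + y for all x, y ≥ 0. Then for any measure space (X, 𝒜, μ) and any measurable f, g : X → [0,∞) with ∫ f^p dμ < ∞ and ∫ g^p dμ < ∞, one has ∫ (f+g)^p dμ ≤ H( ∫ f^p dμ, ∫ g^p dμ, ∫ (fg)^{p/2} dμ ). -/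
open MeasureTheory Real Set
open scoped ENNReal NNReal

lemma aux_mem_smul {c : ℝ} (hc : 0 ≤ c) {x y z : ℝ}
    (h1 : 0 ≤ x) (h2 : 0 ≤ y) (h3 : 0 ≤ z) (h4 : z ≤ Real.sqrt (x * y)) :
    0 ≤ c * x ∧ 0 ≤ c * y ∧ 0 ≤ c * z ∧ c * z ≤ Real.sqrt ((c * x) * (c * y)) := by
  refine ⟨mul_nonneg hc h1, mul_nonneg hc h2, mul_nonneg hc h3, ?_⟩
  have : (c * x) * (c * y) = c ^ 2 * (x * y) := by ring
  rw [this, Real.sqrt_mul (sq_nonneg c), Real.sqrt_sq hc]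
  exact mul_le_mul_of_nonneg_left h4 hc

lemma aux_sqrt_le_add {a b : ℝ} (ha : 0 ≤ a) (hb : 0 ≤ b) :
    Real.sqrt (a * b) ≤ a + b := by
  have h : a * b ≤ (a + b) ^ 2 := by nlinarith
  calc Real.sqrt (a * b) ≤ Real.sqrt ((a + b) ^ 2) := Real.sqrt_le_sqrt h
    _ = a + b := Real.sqrt_sq (by linarith)

lemma aux_inv_mul_mem {t s : ℝ} (ht : 0 ≤ t) (hts : t ≤ s) :
    0 ≤ s⁻¹ * t ∧ s⁻¹ * t ≤ 1 := by
  rcases eq_or_lt_of_le (ht.trans hts) with h | h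
  · simp [← h]
  · exact ⟨by positivity, by rw [inv_mul_le_iff₀ h, mul_one]; exact hts⟩

lemma aux_rpow_half {F G p : ℝ} (hF : 0 ≤ F) (hG : 0 ≤ G) :
    (F * G) ^ (p / 2) = Real.sqrt (F ^ p * G ^ p) := by
  rw [← Real.mul_rpow hF hG, Real.sqrt_eq_rpow,
    ← Real.rpow_mul (mul_nonneg hF hG)]
  ring_nf

lemma aux_rpow_inv {F p : ℝ} (hF : 0 ≤ F) (hp : p ≠ 0) :
    (F ^ p) ^ (1 / p) = F := by
  rw [← Real.rpow_mul hF, mul_one_div, div_self hp, Real.rpow_one]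

lemma aux_mul_rpow_le {a b : ℝ≥0∞} {p : ℝ} (hp : 0 < p) :
    (a * b) ^ (p / 2) ≤ a ^ p + b ^ p := by
  have hp2 : (0:ℝ) ≤ p / 2 := by positivity
  rcases le_total a b with h | h
  · calc (a * b) ^ (p / 2) ≤ (b * b) ^ (p / 2) :=
          ENNReal.rpow_le_rpow (mul_le_mul_left h b) hp2
      _ = b ^ p := by
          rw [← sq, ← ENNReal.rpow_natCast b 2, ← ENNReal.rpow_mul]
          norm_num [mul_div_cancel₀]
      _ ≤ a ^ p + b ^ p := le_add_self
  · calc (a * b) ^ (p / 2) ≤ (a * a) ^ (p / 2) :=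
          ENNReal.rpow_le_rpow (mul_le_mul_right h a) hp2
      _ = a ^ p := by
          rw [← sq, ← ENNReal.rpow_natCast a 2, ← ENNReal.rpow_mul]
          norm_num [mul_div_cancel₀]
      _ ≤ a ^ p + b ^ p := le_self_add

lemma aux_add_rpow_le {a b : ℝ≥0∞} {p : ℝ} (hp : 0 < p) :
    (a + b) ^ p ≤ 2 ^ p * (a ^ p + b ^ p) := by
  have h1 : a + b ≤ 2 * (a ⊔ b) := by
    rw [two_mul]
    exact add_le_add le_sup_left le_sup_right
  calc (a + b) ^ p ≤ (2 * (a ⊔ b)) ^ p := ENNReal.rpow_le_rpow h1 hp.le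
    _ = 2 ^ p * (a ⊔ b) ^ p := ENNReal.mul_rpow_of_nonneg _ _ hp.le
    _ ≤ 2 ^ p * (a ^ p + b ^ p) := by
        gcongr
        rcases le_total a b with h | h
        · rw [sup_eq_right.2 h]; exact le_add_self
        · rw [sup_eq_left.2 h]; exact le_self_add

/-- Lemma (GeneralConcavity), concave case, for `p > 0`: if `H` is continuous, concave and
positively one-homogeneous on the cone `Ω = {x,y ≥ 0, 0 ≤ z ≤ √(xy)}`, with boundary values
`H(x,y,√(xy)) = (x^{1/p}+y^{1/p})^p` and `H(x,y,0) = x + y`, then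
`‖f+g‖_p^p ≤ H(‖f‖_p^p, ‖g‖_p^p, ‖fg‖_{p/2}^{p/2})`. -/
theorem statement14
    {X : Type*} [MeasurableSpace X] (μ : Measure X) (p : ℝ) (hp : 0 < p)
    (Ω : Set (ℝ × ℝ × ℝ))
    (hΩ : Ω = {u : ℝ × ℝ × ℝ |
      0 ≤ u.1 ∧ 0 ≤ u.2.1 ∧ 0 ≤ u.2.2 ∧ u.2.2 ≤ Real.sqrt (u.1 * u.2.1)})
    (H : ℝ × ℝ × ℝ → ℝ)
    (Hcont : ContinuousOn H Ω)
    (Hconc : ConcaveOn ℝ Ω H)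
    (Hhom : ∀ c : ℝ, 0 ≤ c → ∀ u ∈ Ω, H (c • u) = c * H u)
    (Hbdry1 : ∀ x y : ℝ, 0 < x → 0 < y →
      H (x, y, Real.sqrt (x * y)) = (x ^ (1 / p) + y ^ (1 / p)) ^ p)
    (Hbdry2 : ∀ x y : ℝ, 0 ≤ x → 0 ≤ y → H (x, y, 0) = x + y)
    (f g : X → ℝ≥0∞) (hf : Measurable f) (hg : Measurable g)
    (hffin : ∀ x, f x ≠ ∞) (hgfin : ∀ x, g x ≠ ∞)
    (hfp : ∫⁻ x, f x ^ p ∂μ ≠ ∞) (hgp : ∫⁻ x, g x ^ p ∂μ ≠ ∞) :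
    ∫⁻ x, (f x + g x) ^ p ∂μ ≤
      ENNReal.ofReal (H ((∫⁻ x, f x ^ p ∂μ).toReal, (∫⁻ x, g x ^ p ∂μ).toReal,
        (∫⁻ x, (f x * g x) ^ (p / 2) ∂μ).toReal)) := by
  have hp' : p ≠ 0 := hp.ne'
  set F : X → ℝ := fun x => (f x).toReal with hFdef
  set G : X → ℝ := fun x => (g x).toReal with hGdef
  have hF0 : ∀ x, 0 ≤ F x := fun x => ENNReal.toReal_nonneg
  have hG0 : ∀ x, 0 ≤ G x := fun x => ENNReal.toReal_nonneg
  have hmF : Measurable F := hf.ennreal_toReal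
  have hmG : Measurable G := hg.ennreal_toReal
  have hmfp : Measurable (fun x => f x ^ p) := hf.pow_const p
  have hmgp : Measurable (fun x => g x ^ p) := hg.pow_const p
  have hmfgp : Measurable (fun x => (f x * g x) ^ (p / 2)) := (hf.mul hg).pow_const (p / 2)
  -- closedness of Ω
  have hclosed : IsClosed Ω := by
    rw [hΩ]
    simp only [setOf_and]
    refine ((isClosed_le continuous_const continuous_fst).inter
      ((isClosed_le continuous_const (continuous_fst.comp continuous_snd)).inter
        ((isClosed_le continuous_const (continuous_snd.comp continuous_snd)).inter
          (isClosed_le (continuous_snd.comp continuous_snd)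
            ((continuous_fst.mul (continuous_fst.comp continuous_snd)).sqrt)))))
  -- finiteness of the cross integral
  have hcp : ∫⁻ x, (f x * g x) ^ (p / 2) ∂μ ≠ ∞ := by
    have hle : ∫⁻ x, (f x * g x) ^ (p / 2) ∂μ ≤ ∫⁻ x, (f x ^ p + g x ^ p) ∂μ :=
      lintegral_mono fun x => aux_mul_rpow_le hp
    rw [lintegral_add_left hmfp] at hle
    exact ne_top_of_le_ne_top (ENNReal.add_ne_top.2 ⟨hfp, hgp⟩) hle
  -- finiteness of the sum integral
  have hsum_fin : ∫⁻ x, (f x + g x) ^ p ∂μ ≠ ∞ := by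
    have hle : ∫⁻ x, (f x + g x) ^ p ∂μ ≤ ∫⁻ x, 2 ^ p * (f x ^ p + g x ^ p) ∂μ :=
      lintegral_mono fun x => aux_add_rpow_le hp
    rw [lintegral_const_mul' _ _ (by simp : (2:ℝ≥0∞) ^ p ≠ ∞),
      lintegral_add_left hmfp] at hle
    exact ne_top_of_le_ne_top
      (ENNReal.mul_ne_top (by simp) (ENNReal.add_ne_top.2 ⟨hfp, hgp⟩)) hle
  -- real integrability and values
  have i1 : Integrable (fun x => F x ^ p) μ := by
    simpa only [← ENNReal.toReal_rpow] using
      integrable_toReal_of_lintegral_ne_top hmfp.aemeasurable hfp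
  have i2 : Integrable (fun x => G x ^ p) μ := by
    simpa only [← ENNReal.toReal_rpow] using
      integrable_toReal_of_lintegral_ne_top hmgp.aemeasurable hgp
  have i3 : Integrable (fun x => (F x * G x) ^ (p / 2)) μ := by
    simpa only [← ENNReal.toReal_rpow, ENNReal.toReal_mul] using
      integrable_toReal_of_lintegral_ne_top hmfgp.aemeasurable hcp
  have ha : ∫ x, F x ^ p ∂μ = (∫⁻ x, f x ^ p ∂μ).toReal := by
    rw [← integral_toReal hmfp.aemeasurable
      (ae_of_all _ fun x => ENNReal.rpow_lt_top_of_nonneg hp.le (hffin x))]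
    simp only [← ENNReal.toReal_rpow]
    rfl
  have hb : ∫ x, G x ^ p ∂μ = (∫⁻ x, g x ^ p ∂μ).toReal := by
    rw [← integral_toReal hmgp.aemeasurable
      (ae_of_all _ fun x => ENNReal.rpow_lt_top_of_nonneg hp.le (hgfin x))]
    simp only [← ENNReal.toReal_rpow]
    rfl
  have hc : ∫ x, (F x * G x) ^ (p / 2) ∂μ
      = (∫⁻ x, (f x * g x) ^ (p / 2) ∂μ).toReal := by
    rw [← integral_toReal hmfgp.aemeasurable
      (ae_of_all _ fun x => ENNReal.rpow_lt_top_of_nonneg (by positivity)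
        (ENNReal.mul_ne_top (hffin x) (hgfin x)))]
    simp only [← ENNReal.toReal_rpow, ENNReal.toReal_mul]
    rfl
  -- the vector-valued function
  set u : X → ℝ × ℝ × ℝ := fun x => (F x ^ p, G x ^ p, (F x * G x) ^ (p / 2)) with hudef
  have huΩ : ∀ x, u x ∈ Ω := by
    intro x
    rw [hΩ]
    refine ⟨Real.rpow_nonneg (hF0 x) p, Real.rpow_nonneg (hG0 x) p,
      Real.rpow_nonneg (mul_nonneg (hF0 x) (hG0 x)) _, ?_⟩
    exact le_of_eq (aux_rpow_half (hF0 x) (hG0 x))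
  have hcore : ∀ x, H (u x) = (F x + G x) ^ p := by
    intro x
    rcases eq_or_lt_of_le (hF0 x) with hFx | hFx
    · have h1 : F x ^ p = 0 := by rw [← hFx]; exact Real.zero_rpow hp'
      have h3 : (F x * G x) ^ (p / 2) = 0 := by
        rw [← hFx, zero_mul]; exact Real.zero_rpow (by positivity)
      simp only [hudef, h1, h3]
      rw [Hbdry2 0 (G x ^ p) le_rfl (Real.rpow_nonneg (hG0 x) p), ← hFx]
      simp
    · rcases eq_or_lt_of_le (hG0 x) with hGx | hGx
      · have h2 : G x ^ p = 0 := by rw [← hGx]; exact Real.zero_rpow hp'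
        have h3 : (F x * G x) ^ (p / 2) = 0 := by
          rw [← hGx, mul_zero]; exact Real.zero_rpow (by positivity)
        simp only [hudef, h2, h3]
        rw [Hbdry2 (F x ^ p) 0 (Real.rpow_nonneg (hF0 x) p) le_rfl, ← hGx]
        simp
      · simp only [hudef]
        rw [aux_rpow_half (hF0 x) (hG0 x),
          Hbdry1 _ _ (Real.rpow_pos_of_pos hFx p) (Real.rpow_pos_of_pos hGx p),
          aux_rpow_inv (hF0 x) hp', aux_rpow_inv (hG0 x) hp']
  -- the weight and the measure ν
  set w : X → NNReal := fun x => (F x ^ p + G x ^ p).toNNReal with hwdef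
  have hmw : Measurable w := ((hmF.pow_const p).add (hmG.pow_const p)).real_toNNReal
  have hwcoe : ∀ x, (w x : ℝ) = F x ^ p + G x ^ p := fun x =>
    Real.coe_toNNReal _ (by positivity)
  have hofp : ∀ x, ENNReal.ofReal (F x ^ p) = f x ^ p := by
    intro x
    rw [← ENNReal.ofReal_rpow_of_nonneg (hF0 x) hp.le, hFdef,
      ENNReal.ofReal_toReal (hffin x)]
  have hogp : ∀ x, ENNReal.ofReal (G x ^ p) = g x ^ p := by
    intro x
    rw [← ENNReal.ofReal_rpow_of_nonneg (hG0 x) hp.le, hGdef,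
      ENNReal.ofReal_toReal (hgfin x)]
  have hwe : ∀ x, ((w x : ℝ≥0∞)) = f x ^ p + g x ^ p := by
    intro x
    rw [← ENNReal.ofReal_coe_nnreal, hwcoe,
      ENNReal.ofReal_add (by positivity) (by positivity), hofp, hogp]
  set ν : Measure X := μ.withDensity (fun x => (w x : ℝ≥0∞)) with hνdef
  have hνuniv : ν univ = (∫⁻ x, f x ^ p ∂μ) + ∫⁻ x, g x ^ p ∂μ := by
    rw [hνdef, withDensity_apply _ MeasurableSet.univ, Measure.restrict_univ,
      lintegral_congr hwe, lintegral_add_left hmfp]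
  haveI : IsFiniteMeasure ν :=
    ⟨by rw [hνuniv]; exact (ENNReal.add_ne_top.2 ⟨hfp, hgp⟩).lt_top⟩
  by_cases hν : ν = 0
  · -- degenerate case: f = g = 0 a.e.
    have h0 : (∫⁻ x, f x ^ p ∂μ) + ∫⁻ x, g x ^ p ∂μ = 0 := by
      rw [← hνuniv, hν]; simp
    have hf0 : ∀ᵐ x ∂μ, f x = 0 := by
      have := (lintegral_eq_zero_iff hmfp).1 (by
        exact le_antisymm (le_trans le_self_add h0.le) zero_le)
      filter_upwards [this] with x hx
      simpa [ENNReal.rpow_eq_zero_iff, hp, hp.not_gt] using hx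
    have hg0 : ∀ᵐ x ∂μ, g x = 0 := by
      have := (lintegral_eq_zero_iff hmgp).1 (by
        exact le_antisymm (le_trans le_add_self h0.le) zero_le)
      filter_upwards [this] with x hx
      simpa [ENNReal.rpow_eq_zero_iff, hp, hp.not_gt] using hx
    have : ∫⁻ x, (f x + g x) ^ p ∂μ = 0 := by
      rw [← lintegral_zero]
      apply lintegral_congr_ae
      filter_upwards [hf0, hg0] with x hx hy
      rw [hx, hy, add_zero, ENNReal.zero_rpow_of_pos hp]
    rw [this]
    exact zero_le
  · haveI : NeZero ν := ⟨hν⟩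
    -- normalized function v
    set v : X → ℝ × ℝ × ℝ := fun x => ((w x : ℝ))⁻¹ • u x with hvdef
    have hw0 : ∀ x, (w x : ℝ) = 0 → u x = 0 := by
      intro x hx
      rw [hwcoe] at hx
      have h1 : F x ^ p = 0 := by nlinarith [Real.rpow_nonneg (hF0 x) p, Real.rpow_nonneg (hG0 x) p]
      have h2 : G x ^ p = 0 := by nlinarith [Real.rpow_nonneg (hF0 x) p, Real.rpow_nonneg (hG0 x) p]
      have hFx : F x = 0 := by
        by_contra hne
        exact ((Real.rpow_pos_of_pos (lt_of_le_of_ne (hF0 x) (Ne.symm hne)) p).ne' h1)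
      have hGx : G x = 0 := by
        by_contra hne
        exact ((Real.rpow_pos_of_pos (lt_of_le_of_ne (hG0 x) (Ne.symm hne)) p).ne' h2)
      simp only [hudef, hFx, hGx, Prod.mk_eq_zero]
      exact ⟨Real.zero_rpow hp', Real.zero_rpow hp',
        by rw [zero_mul]; exact Real.zero_rpow (by positivity)⟩
    have hwv : ∀ x, (w x : ℝ) • v x = u x := by
      intro x
      rcases eq_or_ne (w x : ℝ) 0 with h | h
      · rw [h, zero_smul, hw0 x h]
      · rw [hvdef, smul_smul, mul_inv_cancel₀ h, one_smul]
    have hvΩ : ∀ x, v x ∈ Ω := by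
      intro x
      have hx := huΩ x
      rw [hΩ] at hx ⊢
      obtain ⟨h1, h2, h3, h4⟩ := hx
      exact aux_mem_smul (by positivity) h1 h2 h3 h4
    -- norm bound for v
    have hle1 : ∀ x, F x ^ p ≤ (w x : ℝ) := by
      intro x; rw [hwcoe]; nlinarith [Real.rpow_nonneg (hG0 x) p]
    have hle2 : ∀ x, G x ^ p ≤ (w x : ℝ) := by
      intro x; rw [hwcoe]; nlinarith [Real.rpow_nonneg (hF0 x) p]
    have hle3 : ∀ x, (F x * G x) ^ (p / 2) ≤ (w x : ℝ) := by
      intro x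
      rw [hwcoe, aux_rpow_half (hF0 x) (hG0 x)]
      exact aux_sqrt_le_add (Real.rpow_nonneg (hF0 x) p) (Real.rpow_nonneg (hG0 x) p)
    have hvnorm : ∀ x, ‖v x‖ ≤ 1 := by
      intro x
      have hb1 := aux_inv_mul_mem (Real.rpow_nonneg (hF0 x) p) (hle1 x)
      have hb2 := aux_inv_mul_mem (Real.rpow_nonneg (hG0 x) p) (hle2 x)
      have hb3 := aux_inv_mul_mem (Real.rpow_nonneg (mul_nonneg (hF0 x) (hG0 x)) (p / 2)) (hle3 x)
      have e : v x = ((w x : ℝ)⁻¹ * F x ^ p, (w x : ℝ)⁻¹ * G x ^ p,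
          (w x : ℝ)⁻¹ * (F x * G x) ^ (p / 2)) := rfl
      rw [e, Prod.norm_def, Prod.norm_def]
      simp only [Real.norm_eq_abs]
      refine max_le ?_ (max_le ?_ ?_) <;>
        rw [abs_of_nonneg (by tauto)] <;> tauto
    -- measurability of v
    have hmu : Measurable u :=
      (hmF.pow_const p).prodMk ((hmG.pow_const p).prodMk ((hmF.mul hmG).pow_const (p / 2)))
    have hmv : Measurable v := (hmw.coe_nnreal_real.inv).smul hmu
    have hmHv : Measurable (fun x => H (v x)) :=
      Hcont.restrict.measurable.comp (hmv.subtype_mk (h := hvΩ))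
    -- integrability over ν
    have hvi : Integrable v ν := by
      refine (integrable_const (1 : ℝ)).mono' hmv.aestronglyMeasurable
        (ae_of_all _ fun x => ?_)
      simpa using hvnorm x
    have hK : IsCompact (Ω ∩ Metric.closedBall 0 1) :=
      (isCompact_closedBall (0 : ℝ × ℝ × ℝ) 1).inter_left hclosed
    obtain ⟨C, hC⟩ := hK.exists_bound_of_continuousOn (Hcont.mono inter_subset_left)
    have hHvi : Integrable (fun x => H (v x)) ν := by
      refine (integrable_const C).mono' hmHv.aestronglyMeasurable
        (ae_of_all _ fun x => ?_)
      exact hC _ ⟨hvΩ x, Metric.mem_closedBall.2 (by simpa [dist_zero_right] using hvnorm x)⟩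
    -- Jensen's inequality for the normalized finite measure
    have hJen : ⨍ x, H (v x) ∂ν ≤ H (⨍ x, v x ∂ν) :=
      Hconc.le_map_average Hcont hclosed (ae_of_all _ hvΩ) hvi hHvi
    have havg : (⨍ x, v x ∂ν) ∈ Ω :=
      Hconc.1.average_mem hclosed (ae_of_all _ hvΩ) hvi
    set m : ℝ := (ν univ).toReal with hmdef
    have hm : 0 < m :=
      ENNReal.toReal_pos (Measure.measure_univ_ne_zero.2 hν) (measure_ne_top ν univ)
    have hIv : ∫ x, v x ∂ν = m • ⨍ x, v x ∂ν := by
      rw [average_eq, show ν.real univ = m from rfl, smul_inv_smul₀ hm.ne']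
    have hIHv : ∫ x, H (v x) ∂ν ≤ m * H (⨍ x, v x ∂ν) := by
      have h2 := mul_le_mul_of_nonneg_left hJen hm.le
      rw [average_eq, show ν.real univ = m from rfl, smul_eq_mul, ← mul_assoc, mul_inv_cancel₀ hm.ne', one_mul] at h2
      exact h2
    have hkey : ∫ x, H (v x) ∂ν ≤ H (∫ x, v x ∂ν) := by
      rw [hIv, Hhom m hm.le _ havg]
      exact hIHv
    -- transferring integrals from ν back to μ
    have ht1 : ∫ x, v x ∂ν = ∫ x, u x ∂μ := by
      rw [hνdef, integral_withDensity_eq_integral_smul hmw]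
      exact integral_congr_ae (ae_of_all _ fun x => by show w x • v x = u x; rw [NNReal.smul_def, hwv x])
    have ht2 : ∫ x, H (v x) ∂ν = ∫ x, H (u x) ∂μ := by
      rw [hνdef, integral_withDensity_eq_integral_smul hmw]
      refine integral_congr_ae (ae_of_all _ fun x => ?_)
      show w x • H (v x) = H (u x)
      rw [NNReal.smul_def, smul_eq_mul, ← Hhom _ (NNReal.coe_nonneg _) _ (hvΩ x), hwv x]
    have hintu : ∫ x, u x ∂μ = ((∫⁻ x, f x ^ p ∂μ).toReal, (∫⁻ x, g x ^ p ∂μ).toReal,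
        (∫⁻ x, (f x * g x) ^ (p / 2) ∂μ).toReal) := by
      show ∫ x, (F x ^ p, (G x ^ p, (F x * G x) ^ (p / 2))) ∂μ = _
      rw [integral_pair i1 (i2.prodMk i3), integral_pair i2 i3, ha, hb, hc]
    have hHu : ∫ x, H (u x) ∂μ = ∫ x, (F x + G x) ^ p ∂μ :=
      integral_congr_ae (ae_of_all _ fun x => by show H (u x) = (F x + G x) ^ p; rw [hcore x])
    have hLHS : ∫⁻ x, (f x + g x) ^ p ∂μ = ENNReal.ofReal (∫ x, (F x + G x) ^ p ∂μ) := by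
      rw [← ENNReal.ofReal_toReal hsum_fin]
      congr 1
      rw [← integral_toReal (f := fun x => (f x + g x) ^ p) ((hf.add hg).pow_const p).aemeasurable
        (ae_of_all _ fun x => ENNReal.rpow_lt_top_of_nonneg hp.le
          (ENNReal.add_ne_top.2 ⟨hffin x, hgfin x⟩))]
      refine integral_congr_ae (ae_of_all _ fun x => ?_)
      show ((f x + g x) ^ p).toReal = (F x + G x) ^ p
      rw [← ENNReal.toReal_rpow, ENNReal.toReal_add (hffin x) (hgfin x)]
    calc ∫⁻ x, (f x + g x) ^ p ∂μ
        = ENNReal.ofReal (∫ x, (F x + G x) ^ p ∂μ) := hLHS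
      _ = ENNReal.ofReal (∫ x, H (u x) ∂μ) := by rw [hHu]
      _ = ENNReal.ofReal (∫ x, H (v x) ∂ν) := by rw [ht2]
      _ ≤ ENNReal.ofReal (H (∫ x, v x ∂ν)) := ENNReal.ofReal_le_ofReal hkey
      _ = _ := by rw [ht1, hintu]
end

section
/- Let p > 0 and let Ω := {(x,y,z) ∈ ℝ³ : x ≥ 0, y ≥ 0, 0 ≤ z ≤ √(xy)}. Let H : Ω → ℝ be continuous, convex on Ω, and positively one-homogeneous (H(λu) = λH(u) for λ ≥ 0, u ∈ Ω), and suppose H(x, y, √(xy)) = (x^{1/p} + y^{1/p})^p for all x, y > 0 and H(x, y, 0) = x + y for all x, y ≥ 0. Then for any measure space (X, 𝒜, μ) and any measurable f, g : X → [0,∞) with ∫ f^p dμ < ∞ and ∫ g^p dμ < ∞, one has ∫ (f+g)^p dμ ≥ H( ∫ f^p dμ, ∫ g^p dμ, ∫ (fg)^{p/2} dμ ). -/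
open MeasureTheory Real Set Filter Topology
open scoped ENNReal


lemma sqrtkey {p α β : ℝ} (hα : 0 ≤ α) (hβ : 0 ≤ β) :
    Real.sqrt (α ^ p * β ^ p) = (α * β) ^ (p / 2) := by
  rw [← Real.mul_rpow hα hβ, Real.sqrt_eq_rpow, ← Real.rpow_mul (mul_nonneg hα hβ)]
  ring_nf

lemma rpow_inv_rpow' {p α : ℝ} (hp : 0 < p) (hα : 0 ≤ α) : (α ^ p) ^ (1 / p) = α := by
  rw [← Real.rpow_mul hα, mul_one_div, div_self hp.ne', Real.rpow_one]

lemma Hval {p α β : ℝ} (hp : 0 < p) (hα : 0 ≤ α) (hβ : 0 ≤ β)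
    {H : ℝ × ℝ × ℝ → ℝ}
    (Hbdry1 : ∀ x y : ℝ, 0 < x → 0 < y →
      H (x, y, Real.sqrt (x * y)) = (x ^ (1 / p) + y ^ (1 / p)) ^ p)
    (Hbdry2 : ∀ x y : ℝ, 0 ≤ x → 0 ≤ y → H (x, y, 0) = x + y) :
    H (α ^ p, β ^ p, (α * β) ^ (p / 2)) = (α + β) ^ p := by
  rcases hα.eq_or_lt with hα0 | hα0
  · rw [← hα0, Real.zero_rpow hp.ne', zero_mul, Real.zero_rpow (by positivity : p / 2 ≠ 0)]
    rw [Hbdry2 0 (β ^ p) le_rfl (Real.rpow_nonneg hβ p), zero_add, zero_add]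
  · rcases hβ.eq_or_lt with hβ0 | hβ0
    · rw [← hβ0, Real.zero_rpow hp.ne', mul_zero, Real.zero_rpow (by positivity : p / 2 ≠ 0)]
      rw [Hbdry2 (α ^ p) 0 (Real.rpow_nonneg hα p) le_rfl, add_zero, add_zero]
    · rw [← sqrtkey hα hβ,
        Hbdry1 _ _ (Real.rpow_pos_of_pos hα0 p) (Real.rpow_pos_of_pos hβ0 p),
        rpow_inv_rpow' hp hα, rpow_inv_rpow' hp hβ]

lemma sq_rpow_half {p γ : ℝ} (hp : p ≠ 0) (hγ : 0 ≤ γ) : (γ ^ (p / 2)) ^ 2 = γ ^ p := by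
  rw [← Real.rpow_natCast (γ ^ (p / 2)) 2, ← Real.rpow_mul hγ]
  norm_num



lemma exists_subgrad {E : Type*} [NormedAddCommGroup E] [NormedSpace ℝ E]
    {Ω : Set E} {H : E → ℝ} (hconv : ConvexOn ℝ Ω H) (hcont : ContinuousOn H Ω)
    {u₀ : E} (hu₀ : u₀ ∈ interior Ω)
    (h0 : (0:E) ∈ Ω) (hH0 : H 0 = 0)
    (h2 : (2:ℝ) • u₀ ∈ Ω) (hH2 : H ((2:ℝ) • u₀) = 2 * H u₀) :
    ∃ w : E →L[ℝ] ℝ, (∀ u ∈ Ω, w u ≤ H u) ∧ w u₀ = H u₀ := by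
  set S : Set (E × ℝ) := {q | q.1 ∈ interior Ω ∧ H q.1 < q.2} with hS
  have hSopen : IsOpen S := by
    have hEq : S = (interior Ω ×ˢ (univ : Set ℝ)) ∩ (fun q : E × ℝ => q.2 - H q.1) ⁻¹' (Ioi 0) := by
      ext q; simp only [hS, mem_setOf_eq, mem_inter_iff, mem_prod, mem_univ, and_true,
        mem_preimage, mem_Ioi, sub_pos]
    rw [hEq]
    refine ContinuousOn.isOpen_inter_preimage ?_ (isOpen_interior.prod isOpen_univ) isOpen_Ioi
    exact continuous_snd.continuousOn.sub
      (((hcont.mono interior_subset).comp continuous_fst.continuousOn) (fun q hq => hq.1))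
  have hSconv : Convex ℝ S := by
    rintro ⟨u, t⟩ ⟨hu, hut⟩ ⟨v, r⟩ ⟨hv, hvr⟩ a b ha hb hab
    refine ⟨hconv.1.interior hu hv ha hb hab, ?_⟩
    have hc : H (a • u + b • v) ≤ a * H u + b * H v :=
      hconv.2 (interior_subset hu) (interior_subset hv) ha hb hab
    rcases ha.eq_or_lt with ha' | ha'
    · have hb1 : b = 1 := by linarith
      simp only [← ha', hb1, zero_smul, one_smul, zero_add, Prod.smul_mk, Prod.mk_add_mk,
        smul_eq_mul, zero_mul, one_mul] at *
      linarith
    · rcases hb.eq_or_lt with hb' | hb'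
      · have ha1 : a = 1 := by linarith
        simp only [← hb', ha1, zero_smul, one_smul, add_zero, Prod.smul_mk, Prod.mk_add_mk,
          smul_eq_mul, zero_mul, one_mul] at *
        linarith
      · have : a * H u + b * H v < a * t + b * r := by
          have := mul_lt_mul_of_pos_left hut ha'
          have := mul_lt_mul_of_pos_left hvr hb'
          linarith
        simpa [Prod.smul_mk, Prod.mk_add_mk, smul_eq_mul] using lt_of_le_of_lt hc this
  have hx₀ : ((u₀, H u₀) : E × ℝ) ∉ S := fun h => lt_irrefl _ h.2
  obtain ⟨ℓ, hℓ⟩ := geometric_hahn_banach_open_point hSconv hSopen hx₀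
  set s : ℝ := ℓ ((0:E), (1:ℝ)) with hsdef
  have hdecomp : ∀ (u : E) (t : ℝ), ℓ (u, t) = ℓ (u, 0) + t * s := by
    intro u t
    have : ((u, t) : E × ℝ) = (u, (0:ℝ)) + t • ((0:E), (1:ℝ)) := by
      simp [Prod.ext_iff]
    rw [this, map_add, _root_.map_smul, smul_eq_mul]
  have key : ∀ u ∈ interior Ω, ∀ t : ℝ, H u < t →
      ℓ (u, 0) + t * s < ℓ (u₀, 0) + H u₀ * s := by
    intro u hu t ht
    have h1 := hℓ (u, t) ⟨hu, ht⟩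
    have e1 := hdecomp u t
    have e2 := hdecomp u₀ (H u₀)
    linarith
  have hs : s < 0 := by
    have := key u₀ hu₀ (H u₀ + 1) (by linarith)
    nlinarith
  have hle : ∀ u ∈ interior Ω, ℓ (u, 0) + H u * s ≤ ℓ (u₀, 0) + H u₀ * s := by
    intro u hu
    refine le_of_forall_pos_le_add ?_
    intro ε hε
    have hs0 : s ≠ 0 := hs.ne
    have hss : s / -s = -1 := by rw [div_neg, div_self hs0]
    have hts : ε / (-s) * s = -ε := by
      rw [div_mul_eq_mul_div, mul_div_assoc, hss]; ring
    have := key u hu (H u + ε / (-s)) (by nlinarith [div_pos hε (neg_pos.mpr hs)])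
    nlinarith
  set w : E →L[ℝ] ℝ := (-s)⁻¹ • (ℓ.comp (ContinuousLinearMap.inl ℝ E ℝ)) with hwdef
  have hwval : ∀ u : E, w u = (-s)⁻¹ * ℓ (u, 0) := by
    intro u
    rw [hwdef]
    simp only [ContinuousLinearMap.smul_apply, ContinuousLinearMap.comp_apply,
      ContinuousLinearMap.inl_apply, smul_eq_mul]
  have hinv : 0 < (-s)⁻¹ := inv_pos.mpr (neg_pos.mpr hs)
  have hmul : (-s)⁻¹ * s = -1 := by
    rw [mul_comm, ← div_eq_mul_inv, div_neg, div_self hs.ne]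
  have hexp : ∀ a t' : ℝ, (-s)⁻¹ * (a + t' * s) = (-s)⁻¹ * a - t' := by
    intro a t'
    rw [mul_add, mul_comm t' s, ← mul_assoc, hmul]; ring
  have hwint : ∀ u ∈ interior Ω, w u - H u ≤ w u₀ - H u₀ := by
    intro u hu
    have h1 := hle u hu
    have h2 := mul_le_mul_of_nonneg_left h1 hinv.le
    rw [hexp, hexp] at h2
    rw [hwval, hwval]
    linarith
  have hwΩ : ∀ u ∈ Ω, w u - H u ≤ w u₀ - H u₀ := by
    intro u hu
    have hev : ∀ᶠ t in 𝓝[>] (0:ℝ), t ∈ Ioc (0:ℝ) 1 :=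
      Ioc_mem_nhdsGT_of_mem ⟨le_refl 0, one_pos⟩
    set γ : ℝ → E := fun t => t • u₀ + (1 - t) • u with hγ
    have hmemInt : ∀ t ∈ Ioc (0:ℝ) 1, γ t ∈ interior Ω := by
      intro t ht
      exact hconv.1.combo_interior_closure_mem_interior hu₀ (subset_closure hu) ht.1
        (by linarith [ht.2]) (by ring)
    have htend0 : Tendsto γ (𝓝[>] (0:ℝ)) (𝓝 u) := by
      have hcontγ : Continuous γ :=
        (continuous_id.smul continuous_const).add
          ((continuous_const.sub continuous_id).smul continuous_const)
      have := hcontγ.tendsto 0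
      simp only [hγ, zero_smul, sub_zero, one_smul, zero_add] at this
      exact this.mono_left nhdsWithin_le_nhds
    have htendΩ : Tendsto γ (𝓝[>] (0:ℝ)) (𝓝[Ω] u) :=
      tendsto_nhdsWithin_of_tendsto_nhds_of_eventually_within γ htend0
        (hev.mono (fun t ht => interior_subset (hmemInt t ht)))
    have htendH : Tendsto (fun t => H (γ t)) (𝓝[>] (0:ℝ)) (𝓝 (H u)) :=
      (hcont u hu).tendsto.comp htendΩ
    have htendw : Tendsto (fun t => w (γ t) - H (γ t)) (𝓝[>] (0:ℝ)) (𝓝 (w u - H u)) :=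
      ((w.continuous.tendsto u).comp htend0).sub htendH
    refine le_of_tendsto htendw ?_
    exact hev.mono (fun t ht => hwint (γ t) (hmemInt t ht))
  have hK0 : 0 ≤ w u₀ - H u₀ := by
    have := hwΩ 0 h0
    simpa [hH0] using this
  have hK0' : w u₀ - H u₀ ≤ 0 := by
    have := hwΩ ((2:ℝ) • u₀) h2
    rw [_root_.map_smul, smul_eq_mul, hH2] at this
    linarith
  have hK : w u₀ = H u₀ := by linarith
  exact ⟨w, fun u hu => by have := hwΩ u hu; linarith, hK⟩

/-- Lemma (GeneralConcavity), convex case, for `p > 0`: if `H` is continuous, convex and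
positively one-homogeneous on the cone `Ω = {x,y ≥ 0, 0 ≤ z ≤ √(xy)}`, with boundary values
`H(x,y,√(xy)) = (x^{1/p}+y^{1/p})^p` and `H(x,y,0) = x + y`, then
`‖f+g‖_p^p ≥ H(‖f‖_p^p, ‖g‖_p^p, ‖fg‖_{p/2}^{p/2})`. -/
theorem statement15
    {X : Type*} [MeasurableSpace X] (μ : Measure X) (p : ℝ) (hp : 0 < p)
    (Ω : Set (ℝ × ℝ × ℝ))
    (hΩ : Ω = {u : ℝ × ℝ × ℝ |
      0 ≤ u.1 ∧ 0 ≤ u.2.1 ∧ 0 ≤ u.2.2 ∧ u.2.2 ≤ Real.sqrt (u.1 * u.2.1)})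
    (H : ℝ × ℝ × ℝ → ℝ)
    (Hcont : ContinuousOn H Ω)
    (Hconv : ConvexOn ℝ Ω H)
    (Hhom : ∀ c : ℝ, 0 ≤ c → ∀ u ∈ Ω, H (c • u) = c * H u)
    (Hbdry1 : ∀ x y : ℝ, 0 < x → 0 < y →
      H (x, y, Real.sqrt (x * y)) = (x ^ (1 / p) + y ^ (1 / p)) ^ p)
    (Hbdry2 : ∀ x y : ℝ, 0 ≤ x → 0 ≤ y → H (x, y, 0) = x + y)
    (f g : X → ℝ≥0∞) (hf : Measurable f) (hg : Measurable g)
    (hffin : ∀ x, f x ≠ ∞) (hgfin : ∀ x, g x ≠ ∞)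
    (hfp : ∫⁻ x, f x ^ p ∂μ ≠ ∞) (hgp : ∫⁻ x, g x ^ p ∂μ ≠ ∞) :
    ENNReal.ofReal (H ((∫⁻ x, f x ^ p ∂μ).toReal, (∫⁻ x, g x ^ p ∂μ).toReal,
        (∫⁻ x, (f x * g x) ^ (p / 2) ∂μ).toReal)) ≤
      ∫⁻ x, (f x + g x) ^ p ∂μ := by
  set A' := ∫⁻ x, f x ^ p ∂μ with hA'def
  set B' := ∫⁻ x, g x ^ p ∂μ with hB'def
  set C' := ∫⁻ x, (f x * g x) ^ (p / 2) ∂μ with hC'def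
  have hmf : Measurable fun x => f x ^ p := hf.pow_const p
  have hmg : Measurable fun x => g x ^ p := hg.pow_const p
  have hmfg : Measurable fun x => (f x * g x) ^ (p / 2) := (hf.mul hg).pow_const (p / 2)
  -- Cauchy-Schwarz
  have hCS : C' ≤ A' ^ (1 / 2 : ℝ) * B' ^ (1 / 2 : ℝ) := by
    have h2 : (2 : ℝ).HolderConjugate 2 := Real.HolderConjugate.two_two
    have hH := ENNReal.lintegral_mul_le_Lp_mul_Lq μ h2
      ((hf.pow_const (p / 2)).aemeasurable) ((hg.pow_const (p / 2)).aemeasurable)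
    simp only [Pi.mul_apply] at hH
    calc C' = ∫⁻ x, f x ^ (p / 2) * g x ^ (p / 2) ∂μ := by
          rw [hC'def]; apply lintegral_congr; intro x
          rw [ENNReal.mul_rpow_of_nonneg _ _ (by positivity : (0:ℝ) ≤ p / 2)]
      _ ≤ (∫⁻ x, (f x ^ (p / 2)) ^ (2:ℝ) ∂μ) ^ (1/2 : ℝ) *
            (∫⁻ x, (g x ^ (p / 2)) ^ (2:ℝ) ∂μ) ^ (1/2 : ℝ) := hH
      _ = A' ^ (1/2 : ℝ) * B' ^ (1/2 : ℝ) := by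
          congr 1 <;> congr 1 <;> apply lintegral_congr <;> intro x <;>
            rw [← ENNReal.rpow_mul, div_mul_cancel₀ p (two_ne_zero)]
  have hC'top : C' ≠ ∞ := by
    refine (lt_of_le_of_lt hCS (ENNReal.mul_lt_top ?_ ?_)).ne
    · exact ENNReal.rpow_lt_top_of_nonneg (by norm_num) hfp
    · exact ENNReal.rpow_lt_top_of_nonneg (by norm_num) hgp
  by_cases hC0 : C' = 0
  · -- disjoint supports case
    have hfg0 : ∀ᵐ x ∂μ, f x * g x = 0 := by
      have h1 : (fun x => (f x * g x) ^ (p / 2)) =ᵐ[μ] 0 :=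
        (lintegral_eq_zero_iff hmfg).mp hC0
      filter_upwards [h1] with x hx
      rcases ENNReal.rpow_eq_zero_iff.mp hx with ⟨h, _⟩ | ⟨_, h⟩
      · exact h
      · linarith [half_pos hp]
    have hD : (∫⁻ x, (f x + g x) ^ p ∂μ) = A' + B' := by
      have hae : (fun x => (f x + g x) ^ p) =ᵐ[μ] fun x => f x ^ p + g x ^ p := by
        filter_upwards [hfg0] with x hx
        rcases mul_eq_zero.mp hx with h | h <;>
          simp [h, ENNReal.zero_rpow_of_pos hp]
      rw [lintegral_congr_ae hae, lintegral_add_left hmf]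
    rw [hD, hC0]
    have : H (A'.toReal, B'.toReal, (0:ℝ≥0∞).toReal) = A'.toReal + B'.toReal := by
      rw [ENNReal.toReal_zero]
      exact Hbdry2 _ _ ENNReal.toReal_nonneg ENNReal.toReal_nonneg
    rw [this, ENNReal.ofReal_add ENNReal.toReal_nonneg ENNReal.toReal_nonneg,
      ENNReal.ofReal_toReal hfp, ENNReal.ofReal_toReal hgp]
  · -- C' ≠ 0, hence A', B' ≠ 0
    have hA0 : A' ≠ 0 := by
      intro h
      apply hC0
      have h1 : (fun x => f x ^ p) =ᵐ[μ] 0 := (lintegral_eq_zero_iff hmf).mp h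
      have h2 : (fun x => (f x * g x) ^ (p / 2)) =ᵐ[μ] 0 := by
        filter_upwards [h1] with x hx
        have hfx : f x = 0 := by
          rcases ENNReal.rpow_eq_zero_iff.mp hx with ⟨h, _⟩ | ⟨_, h⟩
          · exact h
          · linarith
        simp [hfx, ENNReal.zero_rpow_of_pos (half_pos hp)]
      rw [hC'def, lintegral_congr_ae h2]; simp
    have hB0 : B' ≠ 0 := by
      intro h
      apply hC0
      have h1 : (fun x => g x ^ p) =ᵐ[μ] 0 := (lintegral_eq_zero_iff hmg).mp h
      have h2 : (fun x => (f x * g x) ^ (p / 2)) =ᵐ[μ] 0 := by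
        filter_upwards [h1] with x hx
        have hgx : g x = 0 := by
          rcases ENNReal.rpow_eq_zero_iff.mp hx with ⟨h, _⟩ | ⟨_, h⟩
          · exact h
          · linarith
        simp [hgx, ENNReal.zero_rpow_of_pos (half_pos hp)]
      rw [hC'def, lintegral_congr_ae h2]; simp
    set A := A'.toReal with hAdef
    set B := B'.toReal with hBdef
    set C := C'.toReal with hCdef
    have hApos : 0 < A := ENNReal.toReal_pos hA0 hfp
    have hBpos : 0 < B := ENNReal.toReal_pos hB0 hgp
    have hCpos : 0 < C := ENNReal.toReal_pos hC0 hC'top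
    have hCle : C ≤ Real.sqrt (A * B) := by
      have h1 := ENNReal.toReal_mono
        (ENNReal.mul_lt_top (ENNReal.rpow_lt_top_of_nonneg (by norm_num) hfp)
          (ENNReal.rpow_lt_top_of_nonneg (by norm_num) hgp)).ne hCS
      rw [ENNReal.toReal_mul, ← ENNReal.toReal_rpow, ← ENNReal.toReal_rpow] at h1
      rw [Real.sqrt_eq_rpow, Real.mul_rpow ENNReal.toReal_nonneg ENNReal.toReal_nonneg]
      exact h1
    -- real-valued integrable versions
    have hfin_fp : ∀ᵐ x ∂μ, f x ^ p < ∞ :=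
      ae_of_all _ fun x => ENNReal.rpow_lt_top_of_nonneg hp.le (hffin x)
    have hfin_gp : ∀ᵐ x ∂μ, g x ^ p < ∞ :=
      ae_of_all _ fun x => ENNReal.rpow_lt_top_of_nonneg hp.le (hgfin x)
    have hfin_fgp : ∀ᵐ x ∂μ, (f x * g x) ^ (p / 2) < ∞ :=
      ae_of_all _ fun x => ENNReal.rpow_lt_top_of_nonneg (by positivity)
        (ENNReal.mul_ne_top (hffin x) (hgfin x))
    have intF : Integrable (fun x => (f x ^ p).toReal) μ :=
      integrable_toReal_of_lintegral_ne_top hmf.aemeasurable hfp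
    have intG : Integrable (fun x => (g x ^ p).toReal) μ :=
      integrable_toReal_of_lintegral_ne_top hmg.aemeasurable hgp
    have intFG : Integrable (fun x => ((f x * g x) ^ (p / 2)).toReal) μ :=
      integrable_toReal_of_lintegral_ne_top hmfg.aemeasurable hC'top
    have iF : ∫ x, (f x ^ p).toReal ∂μ = A := (integral_toReal hmf.aemeasurable hfin_fp)
    have iG : ∫ x, (g x ^ p).toReal ∂μ = B := (integral_toReal hmg.aemeasurable hfin_gp)
    have iFG : ∫ x, ((f x * g x) ^ (p / 2)).toReal ∂μ = C :=
      (integral_toReal hmfg.aemeasurable hfin_fgp)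
    have eF : ∀ x, (f x ^ p).toReal = (f x).toReal ^ p :=
      fun x => (ENNReal.toReal_rpow _ _).symm
    have eG : ∀ x, (g x ^ p).toReal = (g x).toReal ^ p :=
      fun x => (ENNReal.toReal_rpow _ _).symm
    have eFG : ∀ x, ((f x * g x) ^ (p / 2)).toReal
        = (f x).toReal ^ (p / 2) * (g x).toReal ^ (p / 2) := fun x => by
      rw [← ENNReal.toReal_rpow, ENNReal.toReal_mul,
        Real.mul_rpow ENNReal.toReal_nonneg ENNReal.toReal_nonneg]
    have hsA : 0 < Real.sqrt A := Real.sqrt_pos.mpr hApos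
    have hsB : 0 < Real.sqrt B := Real.sqrt_pos.mpr hBpos
    rcases hCle.lt_or_eq with hlt | heq
    · -- interior case : separation
      by_cases hD : (∫⁻ x, (f x + g x) ^ p ∂μ) = ⊤
      · rw [hD]; exact le_top
      set u₀ : ℝ × ℝ × ℝ := (A, B, C) with hu₀def
      have hV : u₀ ∈ interior Ω := by
        have hVsub : {u : ℝ × ℝ × ℝ |
            0 < u.1 ∧ 0 < u.2.1 ∧ 0 < u.2.2 ∧ u.2.2 < Real.sqrt (u.1 * u.2.1)} ⊆ Ω := by
          rw [hΩ]; rintro u ⟨h1, h2, h3, h4⟩; exact ⟨h1.le, h2.le, h3.le, h4.le⟩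
        have c1 : Continuous fun u : ℝ × ℝ × ℝ => u.1 := continuous_fst
        have c2 : Continuous fun u : ℝ × ℝ × ℝ => u.2.1 := continuous_fst.comp continuous_snd
        have c3 : Continuous fun u : ℝ × ℝ × ℝ => u.2.2 := continuous_snd.comp continuous_snd
        have c4 : Continuous fun u : ℝ × ℝ × ℝ => Real.sqrt (u.1 * u.2.1) :=
          Real.continuous_sqrt.comp (c1.mul c2)
        have hVopen : IsOpen {u : ℝ × ℝ × ℝ |
            0 < u.1 ∧ 0 < u.2.1 ∧ 0 < u.2.2 ∧ u.2.2 < Real.sqrt (u.1 * u.2.1)} :=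
          (isOpen_lt continuous_const c1).and ((isOpen_lt continuous_const c2).and
            ((isOpen_lt continuous_const c3).and (isOpen_lt c3 c4)))
        exact interior_maximal hVsub hVopen ⟨hApos, hBpos, hCpos, hlt⟩
      have h0Ω : (0 : ℝ × ℝ × ℝ) ∈ Ω := by
        rw [hΩ]
        refine ⟨le_rfl, le_rfl, le_rfl, ?_⟩
        simp
      have hH0 : H 0 = 0 := by
        have := Hhom 0 le_rfl 0 h0Ω
        simpa using this
      have hsmul2 : ((2:ℝ) • u₀ : ℝ × ℝ × ℝ) = (2 * A, 2 * B, 2 * C) := by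
        simp [hu₀def, Prod.smul_mk, smul_eq_mul]
      have h2Ω : ((2:ℝ) • u₀ : ℝ × ℝ × ℝ) ∈ Ω := by
        rw [hsmul2, hΩ]
        refine ⟨by positivity, by positivity, by positivity, ?_⟩
        show 2 * C ≤ Real.sqrt (2 * A * (2 * B))
        have e : Real.sqrt (2 * A * (2 * B)) = 2 * Real.sqrt (A * B) := by
          rw [show (2:ℝ) * A * (2 * B) = 2 ^ 2 * (A * B) by ring,
            Real.sqrt_mul (by positivity), Real.sqrt_sq (by norm_num)]
        rw [e]
        linarith [hlt]
      have hH2 : H ((2:ℝ) • u₀) = 2 * H u₀ := Hhom 2 (by norm_num) u₀ (interior_subset hV)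
      obtain ⟨w, hwle, hweq⟩ := exists_subgrad Hconv Hcont hV h0Ω hH0 h2Ω hH2
      set a := w (1, 0, 0) with hadef
      set b := w (0, 1, 0) with hbdef
      set c := w (0, 0, 1) with hcdef
      have hwdec : ∀ x y z : ℝ, w (x, y, z) = a * x + b * y + c * z := by
        intro x y z
        have e : ((x, y, z) : ℝ × ℝ × ℝ)
            = x • ((1, 0, 0) : ℝ × ℝ × ℝ) + y • (0, 1, 0) + z • (0, 0, 1) := by
          simp [Prod.ext_iff]
        rw [e, map_add, map_add, _root_.map_smul, _root_.map_smul, _root_.map_smul, smul_eq_mul, smul_eq_mul,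
          smul_eq_mul, ← hadef, ← hbdef, ← hcdef]
        ring
      have hpt : ∀ x : X, a * (f x ^ p).toReal + b * (g x ^ p).toReal
          + c * ((f x * g x) ^ (p / 2)).toReal ≤ ((f x + g x) ^ p).toReal := by
        intro x
        set α := (f x).toReal with hα'
        set β := (g x).toReal with hβ'
        have hα : 0 ≤ α := ENNReal.toReal_nonneg
        have hβ : 0 ≤ β := ENNReal.toReal_nonneg
        have e1 : (f x ^ p).toReal = α ^ p := (ENNReal.toReal_rpow _ _).symm
        have e2 : (g x ^ p).toReal = β ^ p := (ENNReal.toReal_rpow _ _).symm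
        have e3 : ((f x * g x) ^ (p / 2)).toReal = (α * β) ^ (p / 2) := by
          rw [← ENNReal.toReal_rpow, ENNReal.toReal_mul]
        have e4 : ((f x + g x) ^ p).toReal = (α + β) ^ p := by
          rw [← ENNReal.toReal_rpow, ENNReal.toReal_add (hffin x) (hgfin x)]
        have hmem : ((α ^ p, β ^ p, (α * β) ^ (p / 2)) : ℝ × ℝ × ℝ) ∈ Ω := by
          rw [hΩ]
          exact ⟨Real.rpow_nonneg hα p, Real.rpow_nonneg hβ p,
            Real.rpow_nonneg (mul_nonneg hα hβ) _, (sqrtkey hα hβ).ge⟩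
        have hHx : H (α ^ p, β ^ p, (α * β) ^ (p / 2)) = (α + β) ^ p :=
          Hval hp hα hβ Hbdry1 Hbdry2
        have hle := hwle _ hmem
        rw [hwdec, hHx] at hle
        rw [e1, e2, e3, e4]
        exact hle
      have intS : Integrable (fun x => ((f x + g x) ^ p).toReal) μ :=
        integrable_toReal_of_lintegral_ne_top ((hf.add hg).pow_const p).aemeasurable hD
      have iS : ∫ x, ((f x + g x) ^ p).toReal ∂μ = (∫⁻ x, (f x + g x) ^ p ∂μ).toReal :=
        integral_toReal ((hf.add hg).pow_const p).aemeasurable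
          (ae_of_all _ fun x => ENNReal.rpow_lt_top_of_nonneg hp.le
            (ENNReal.add_ne_top.mpr ⟨hffin x, hgfin x⟩))
      have iA' : Integrable (fun x => a * (f x ^ p).toReal) μ := intF.const_mul a
      have iB' : Integrable (fun x => b * (g x ^ p).toReal) μ := intG.const_mul b
      have iC' : Integrable (fun x => c * ((f x * g x) ^ (p / 2)).toReal) μ :=
        intFG.const_mul c
      have iAB' : Integrable
          (fun x => a * (f x ^ p).toReal + b * (g x ^ p).toReal) μ := iA'.add iB'
      have intComb : Integrable (fun x => a * (f x ^ p).toReal + b * (g x ^ p).toReal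
          + c * ((f x * g x) ^ (p / 2)).toReal) μ := iAB'.add iC'
      have iComb : ∫ x, (a * (f x ^ p).toReal + b * (g x ^ p).toReal
          + c * ((f x * g x) ^ (p / 2)).toReal) ∂μ = a * A + b * B + c * C := by
        rw [integral_add iAB' iC', integral_add iA' iB', integral_const_mul,
          integral_const_mul, integral_const_mul, iF, iG, iFG]
      have hfinal : H u₀ ≤ (∫⁻ x, (f x + g x) ^ p ∂μ).toReal := by
        calc H u₀ = w u₀ := hweq.symm
          _ = a * A + b * B + c * C := hwdec A B C
          _ = ∫ x, (a * (f x ^ p).toReal + b * (g x ^ p).toReal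
              + c * ((f x * g x) ^ (p / 2)).toReal) ∂μ := iComb.symm
          _ ≤ ∫ x, ((f x + g x) ^ p).toReal ∂μ := integral_mono intComb intS hpt
          _ = _ := iS
      calc ENNReal.ofReal (H u₀)
          ≤ ENNReal.ofReal ((∫⁻ x, (f x + g x) ^ p ∂μ).toReal) :=
            ENNReal.ofReal_le_ofReal hfinal
        _ = ∫⁻ x, (f x + g x) ^ p ∂μ := ENNReal.ofReal_toReal hD
    · -- equality case: proportional functions
      set h : X → ℝ :=
        fun x => Real.sqrt B * (f x).toReal ^ (p / 2) - Real.sqrt A * (g x).toReal ^ (p / 2)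
        with hhdef
      have hsq : ∀ x, h x ^ 2 = B * (f x ^ p).toReal + A * (g x ^ p).toReal
          - (2 * (Real.sqrt A * Real.sqrt B)) * ((f x * g x) ^ (p / 2)).toReal := by
        intro x
        have e1 : ((f x).toReal ^ (p / 2)) ^ 2 = (f x).toReal ^ p :=
          sq_rpow_half hp.ne' ENNReal.toReal_nonneg
        have e2 : ((g x).toReal ^ (p / 2)) ^ 2 = (g x).toReal ^ p :=
          sq_rpow_half hp.ne' ENNReal.toReal_nonneg
        have eA : Real.sqrt A ^ 2 = A := Real.sq_sqrt hApos.le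
        have eB : Real.sqrt B ^ 2 = B := Real.sq_sqrt hBpos.le
        rw [eF, eG, eFG]
        calc h x ^ 2 = Real.sqrt B ^ 2 * ((f x).toReal ^ (p / 2)) ^ 2
              + Real.sqrt A ^ 2 * ((g x).toReal ^ (p / 2)) ^ 2
              - (2 * (Real.sqrt A * Real.sqrt B))
                  * ((f x).toReal ^ (p / 2) * (g x).toReal ^ (p / 2)) := by
              rw [hhdef]; ring
          _ = _ := by rw [e1, e2, eA, eB]
      have hcomb : Integrable (fun x => B * (f x ^ p).toReal + A * (g x ^ p).toReal
          - (2 * (Real.sqrt A * Real.sqrt B)) * ((f x * g x) ^ (p / 2)).toReal) μ :=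
        ((intF.const_mul B).add (intG.const_mul A)).sub (intFG.const_mul _)
      have intH2 : Integrable (fun x => h x ^ 2) μ := by
        have : (fun x => h x ^ 2) = fun x => B * (f x ^ p).toReal + A * (g x ^ p).toReal
            - (2 * (Real.sqrt A * Real.sqrt B)) * ((f x * g x) ^ (p / 2)).toReal :=
          funext hsq
        rw [this]; exact hcomb
      have hsAB : Real.sqrt A * Real.sqrt B = C := by
        rw [← Real.sqrt_mul hApos.le, ← heq]
      have hCC : C * C = A * B := by
        rw [heq]; exact Real.mul_self_sqrt (by positivity)
      have iH2 : ∫ x, h x ^ 2 ∂μ = 0 := by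
        have e : ∫ x, h x ^ 2 ∂μ = B * A + A * B
            - (2 * (Real.sqrt A * Real.sqrt B)) * C := by
          simp_rw [hsq]
          have iFB : Integrable (fun x => B * (f x ^ p).toReal) μ := intF.const_mul B
          have iGA : Integrable (fun x => A * (g x ^ p).toReal) μ := intG.const_mul A
          have i1 : Integrable
              (fun x => B * (f x ^ p).toReal + A * (g x ^ p).toReal) μ := iFB.add iGA
          have i2 : Integrable (fun x =>
              (2 * (Real.sqrt A * Real.sqrt B)) * ((f x * g x) ^ (p / 2)).toReal) μ :=
            intFG.const_mul _
          rw [integral_sub i1 i2, integral_add iFB iGA,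
            integral_const_mul, integral_const_mul, integral_const_mul, iF, iG, iFG]
        rw [e, hsAB]
        nlinarith [hCC]
      have hae0 : h =ᵐ[μ] 0 := by
        have h2ae : (fun x => h x ^ 2) =ᵐ[μ] 0 :=
          (integral_eq_zero_iff_of_nonneg (fun x => sq_nonneg _) intH2).mp iH2
        filter_upwards [h2ae] with x hx
        exact pow_eq_zero_iff two_ne_zero |>.mp hx
      set lam := (Real.sqrt B / Real.sqrt A) ^ (2 / p) with hlam
      have hlampos : 0 < lam := Real.rpow_pos_of_pos (div_pos hsB hsA) _
      have hexp1 : p / 2 * (2 / p) = 1 := by field_simp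
      have hgf : ∀ᵐ x ∂μ, g x = ENNReal.ofReal lam * f x := by
        filter_upwards [hae0] with x hx
        have heq1 : Real.sqrt B * (f x).toReal ^ (p / 2)
            = Real.sqrt A * (g x).toReal ^ (p / 2) := by
          have : h x = 0 := hx
          rw [hhdef] at this
          linarith [this]
        have hβe : (g x).toReal ^ (p / 2)
            = (Real.sqrt B / Real.sqrt A) * (f x).toReal ^ (p / 2) := by
          rw [div_mul_eq_mul_div, eq_div_iff hsA.ne']
          linarith [heq1]
        have hβ : (g x).toReal = lam * (f x).toReal := by
          calc (g x).toReal = ((g x).toReal ^ (p / 2)) ^ (2 / p) := by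
                rw [← Real.rpow_mul ENNReal.toReal_nonneg, hexp1, Real.rpow_one]
            _ = ((Real.sqrt B / Real.sqrt A) * (f x).toReal ^ (p / 2)) ^ (2 / p) := by
                rw [hβe]
            _ = lam * (f x).toReal := by
                rw [Real.mul_rpow (by positivity) (by positivity), hlam,
                  ← Real.rpow_mul ENNReal.toReal_nonneg, hexp1, Real.rpow_one]
        calc g x = ENNReal.ofReal (g x).toReal := (ENNReal.ofReal_toReal (hgfin x)).symm
          _ = ENNReal.ofReal (lam * (f x).toReal) := by rw [hβ]
          _ = ENNReal.ofReal lam * f x := by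
              rw [ENNReal.ofReal_mul hlampos.le, ENNReal.ofReal_toReal (hffin x)]
      set L := ENNReal.ofReal lam with hLdef
      have hD : (∫⁻ x, (f x + g x) ^ p ∂μ) = (1 + L) ^ p * A' := by
        have hae : (fun x => (f x + g x) ^ p) =ᵐ[μ] fun x => (1 + L) ^ p * f x ^ p := by
          filter_upwards [hgf] with x hx
          have e : f x + L * f x = (1 + L) * f x := by ring
          rw [hx, e, ENNReal.mul_rpow_of_nonneg _ _ hp.le]
        rw [lintegral_congr_ae hae, lintegral_const_mul _ hmf]
      rw [hD]
      have hHval : H (A, B, C) = (1 + lam) ^ p * A := by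
        rw [heq, Hbdry1 A B hApos hBpos]
        have hlam' : lam = (B / A) ^ (1 / p) := by
          rw [hlam, ← Real.sqrt_div hBpos.le, Real.sqrt_eq_rpow,
            ← Real.rpow_mul (by positivity)]
          congr 1
          ring
        have hB1p : B ^ (1 / p) = lam * A ^ (1 / p) := by
          rw [hlam', ← Real.mul_rpow (by positivity) hApos.le, div_mul_cancel₀ _ hApos.ne']
        rw [hB1p]
        have e : A ^ (1 / p) + lam * A ^ (1 / p) = (1 + lam) * A ^ (1 / p) := by ring
        rw [e, Real.mul_rpow (by positivity) (by positivity), ← Real.rpow_mul hApos.le,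
          one_div_mul_cancel hp.ne', Real.rpow_one]
      have h1L : (1 : ℝ≥0∞) + L = ENNReal.ofReal (1 + lam) := by
        rw [ENNReal.ofReal_add zero_le_one hlampos.le, ENNReal.ofReal_one]
      rw [hHval, ENNReal.ofReal_mul (by positivity), h1L,
        ENNReal.ofReal_rpow_of_pos (by positivity), hAdef, ENNReal.ofReal_toReal hfp]
end

section
/- Let p ∈ [1,2] and let n ≥ 1. For any nonnegative real numbers a_1, …, a_n, one has (∑_{j=1}^n a_j)^p ≤ ∑_{j=1}^n a_j^p + (2^p − 2) · ∑_{1 ≤ i < j ≤ n} (a_i a_j)^{p/2}. -/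
open Real

-- key scalar lemma: for t ∈ (0,1], G t ≤ 2^p - 2 via monotonicity
private lemma aux_bracket {p t : ℝ} (hp1 : 1 ≤ p) (hp2 : p ≤ 2) (ht0 : 0 < t) (ht1 : t < 1) :
    0 ≤ t * (p * (1 + t) ^ (p - 1) - p * t ^ (p - 1))
        - p / 2 * ((1 + t) ^ p - 1 - t ^ p) := by
  set u := (1 + t) ^ (p - 1) with hu
  have h1t : (0:ℝ) < 1 + t := by linarith
  have hup : (1 + t) ^ p = u * (1 + t) := by
    rw [hu, show p = (p - 1) + 1 by ring, Real.rpow_add h1t, Real.rpow_one]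
    ring_nf
  have htp : t ^ p = t ^ (p - 1) * t := by
    rw [show p = (p - 1) + 1 by ring, Real.rpow_add ht0, Real.rpow_one]
    ring_nf
  have hber : u ≤ 1 + (p - 1) * t :=
    rpow_one_add_le_one_add_mul_self (by linarith) (by linarith) (by linarith)
  have hgm : t ^ (p - 1) ≤ (p - 1) * t + (2 - p) * 1 := by
    have := Real.geom_mean_le_arith_mean2_weighted (w₁ := p - 1) (w₂ := 2 - p)
      (p₁ := t) (p₂ := 1) (by linarith) (by linarith) ht0.le zero_le_one (by ring)
    simpa using this
  have hu0 : 0 ≤ u := Real.rpow_nonneg (by linarith) _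
  nlinarith [mul_le_mul_of_nonneg_left hber (by linarith : (0:ℝ) ≤ 1 - t),
    mul_le_mul_of_nonneg_left hgm ht0.le]

private lemma key_scalar {p t : ℝ} (hp1 : 1 ≤ p) (hp2 : p ≤ 2) (ht0 : 0 ≤ t) (ht1 : t ≤ 1) :
    (1 + t) ^ p ≤ 1 + t ^ p + ((2:ℝ) ^ p - 2) * t ^ (p / 2) := by
  rcases eq_or_lt_of_le ht0 with rfl | ht0'
  · simp [Real.zero_rpow (by linarith : p ≠ 0), Real.zero_rpow (by positivity : p / 2 ≠ 0)]
  set G : ℝ → ℝ := fun t => ((1 + t) ^ p - 1 - t ^ p) * t ^ (-(p / 2)) with hG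
  have hderiv : ∀ x ∈ Set.Ioo (0:ℝ) 1, HasDerivAt G
      ((1 * p * (1 + x) ^ (p - 1) - p * x ^ (p - 1)) * x ^ (-(p / 2))
        + ((1 + x) ^ p - 1 - x ^ p) * (-(p / 2) * x ^ (-(p / 2) - 1))) x := by
    intro x hx
    have hx0 : x ≠ 0 := ne_of_gt hx.1
    have h1 : HasDerivAt (fun y : ℝ => (1 + y) ^ p) (1 * p * (1 + x) ^ (p - 1)) x :=
      ((hasDerivAt_id x).const_add 1).rpow_const (Or.inr hp1)
    have h2 : HasDerivAt (fun y : ℝ => y ^ p) (p * x ^ (p - 1)) x :=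
      Real.hasDerivAt_rpow_const (Or.inl hx0)
    have h3 : HasDerivAt (fun y : ℝ => y ^ (-(p / 2))) (-(p / 2) * x ^ (-(p / 2) - 1)) x :=
      Real.hasDerivAt_rpow_const (Or.inl hx0)
    exact ((h1.sub_const 1).sub h2).mul h3
  have hdiff : ∀ x ∈ Set.Ioc (0:ℝ) 1, DifferentiableAt ℝ G x := by
    intro x hx
    have hx0 : x ≠ 0 := ne_of_gt hx.1
    have h1 : HasDerivAt (fun y : ℝ => (1 + y) ^ p) (1 * p * (1 + x) ^ (p - 1)) x :=
      ((hasDerivAt_id x).const_add 1).rpow_const (Or.inr hp1)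
    have h2 : HasDerivAt (fun y : ℝ => y ^ p) (p * x ^ (p - 1)) x :=
      Real.hasDerivAt_rpow_const (Or.inl hx0)
    have h3 : HasDerivAt (fun y : ℝ => y ^ (-(p / 2))) (-(p / 2) * x ^ (-(p / 2) - 1)) x :=
      Real.hasDerivAt_rpow_const (Or.inl hx0)
    exact (((h1.sub_const 1).sub h2).mul h3).differentiableAt
  have hmono : MonotoneOn G (Set.Ioc (0:ℝ) 1) := by
    apply monotoneOn_of_deriv_nonneg (convex_Ioc 0 1)
    · exact fun x hx => (hdiff x hx).continuousAt.continuousWithinAt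
    · intro x hx
      rw [interior_Ioc] at hx
      exact (hdiff x ⟨hx.1, hx.2.le⟩).differentiableWithinAt
    · intro x hx
      rw [interior_Ioc] at hx
      rw [(hderiv x hx).deriv]
      have hx0 := hx.1
      have hsplit : x ^ (-(p / 2)) = x ^ (-(p / 2) - 1) * x := by
        rw [← Real.rpow_add_one (ne_of_gt hx0)]
        ring_nf
      have hb := aux_bracket hp1 hp2 hx.1 hx.2
      have hpos : (0:ℝ) ≤ x ^ (-(p / 2) - 1) := Real.rpow_nonneg hx0.le _
      rw [hsplit]
      calc (0:ℝ) ≤ x ^ (-(p / 2) - 1) *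
            (x * (p * (1 + x) ^ (p - 1) - p * x ^ (p - 1)) - p / 2 * ((1 + x) ^ p - 1 - x ^ p)) :=
            mul_nonneg hpos hb
        _ = (1 * p * (1 + x) ^ (p - 1) - p * x ^ (p - 1)) * (x ^ (-(p / 2) - 1) * x)
            + ((1 + x) ^ p - 1 - x ^ p) * (-(p / 2) * x ^ (-(p / 2) - 1)) := by ring
  have hG1 : G 1 = (2:ℝ) ^ p - 2 := by
    simp only [hG]
    norm_num
    ring
  have hGt : G t ≤ (2:ℝ) ^ p - 2 := by
    rw [← hG1]
    exact hmono ⟨ht0', ht1⟩ ⟨zero_lt_one, le_rfl⟩ ht1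
  have hcancel : t ^ (-(p / 2)) * t ^ (p / 2) = 1 := by
    rw [← Real.rpow_add ht0']
    simp
  have htq : (0:ℝ) < t ^ (p / 2) := Real.rpow_pos_of_pos ht0' _
  have := mul_le_mul_of_nonneg_right hGt htq.le
  rw [hG] at this
  simp only at this
  rw [mul_assoc, hcancel, mul_one] at this
  linarith

private lemma two_var_le {p a b : ℝ} (hp1 : 1 ≤ p) (hp2 : p ≤ 2) (ha : 0 ≤ a) (hb : 0 ≤ b)
    (hba : b ≤ a) : (a + b) ^ p ≤ a ^ p + b ^ p + ((2:ℝ) ^ p - 2) * (a * b) ^ (p / 2) := by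
  rcases eq_or_lt_of_le ha with rfl | ha'
  · have hb0 : b = 0 := le_antisymm hba hb
    subst hb0
    simp [Real.zero_rpow (by linarith : p ≠ 0), Real.zero_rpow (by positivity : p / 2 ≠ 0)]
  set t := b / a with htdef
  have ht0 : 0 ≤ t := div_nonneg hb ha'.le
  have ht1 : t ≤ 1 := by rw [htdef, div_le_one ha']; exact hba
  have hb' : b = a * t := by rw [htdef]; field_simp [ha'.ne']
  have key := key_scalar hp1 hp2 ht0 ht1
  have hab : a + b = a * (1 + t) := by rw [hb']; ring
  have e1 : (a + b) ^ p = a ^ p * (1 + t) ^ p := by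
    rw [hab, Real.mul_rpow ha'.le (by linarith)]
  have e2 : b ^ p = a ^ p * t ^ p := by
    rw [hb', Real.mul_rpow ha'.le ht0]
  have e3 : (a * b) ^ (p / 2) = a ^ p * t ^ (p / 2) := by
    rw [hb', show a * (a * t) = (a * a) * t by ring,
      Real.mul_rpow (mul_nonneg ha'.le ha'.le) ht0,
      Real.mul_rpow ha'.le ha'.le, ← Real.rpow_add ha']
    ring_nf
  have hap : (0:ℝ) ≤ a ^ p := Real.rpow_nonneg ha'.le _
  have := mul_le_mul_of_nonneg_left key hap
  rw [e1, e2, e3]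
  nlinarith
  
private lemma two_var_s16 {p a b : ℝ} (hp1 : 1 ≤ p) (hp2 : p ≤ 2) (ha : 0 ≤ a) (hb : 0 ≤ b) :
    (a + b) ^ p ≤ a ^ p + b ^ p + ((2:ℝ) ^ p - 2) * (a * b) ^ (p / 2) := by
  rcases le_total b a with h | h
  · exact two_var_le hp1 hp2 ha hb h
  · have := two_var_le hp1 hp2 hb ha h
    rw [add_comm, mul_comm a b]
    linarith

private lemma rpow_add_le {x y q : ℝ} (hx : 0 ≤ x) (hy : 0 ≤ y) (hq0 : 0 ≤ q) (hq1 : q ≤ 1) :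
    (x + y) ^ q ≤ x ^ q + y ^ q := by
  lift x to NNReal using hx
  lift y to NNReal using hy
  exact_mod_cast NNReal.rpow_add_le_add_rpow x y hq0 hq1

private lemma sum_rpow_le {ι : Type*} {q : ℝ} (hq0 : 0 < q) (hq1 : q ≤ 1)
    (s : Finset ι) (a : ι → ℝ) (ha : ∀ i, 0 ≤ a i) :
    (∑ i ∈ s, a i) ^ q ≤ ∑ i ∈ s, a i ^ q := by
  classical
  induction s using Finset.induction_on with
  | empty => simp [Real.zero_rpow hq0.ne']
  | @insert x s' hx ih =>
    rw [Finset.sum_insert hx, Finset.sum_insert hx]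
    calc (a x + ∑ i ∈ s', a i) ^ q ≤ a x ^ q + (∑ i ∈ s', a i) ^ q :=
          rpow_add_le (ha x) (Finset.sum_nonneg fun i _ => ha i) hq0.le hq1
      _ ≤ a x ^ q + ∑ i ∈ s', a i ^ q := by linarith [ih]

private lemma double_sum_insert {ι : Type*} [LinearOrder ι] (f : ι → ι → ℝ)
    (hf : ∀ i j, f i j = f j i) (s : Finset ι) (x : ι) (hx : x ∉ s) :
    ∑ i ∈ insert x s, ∑ j ∈ insert x s, (if i < j then f i j else 0)
      = (∑ i ∈ s, ∑ j ∈ s, (if i < j then f i j else 0)) + ∑ j ∈ s, f j x := by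
  classical
  rw [Finset.sum_insert hx]
  have inner : ∀ i, ∑ j ∈ insert x s, (if i < j then f i j else 0)
      = (if i < x then f i x else 0) + ∑ j ∈ s, (if i < j then f i j else 0) :=
    fun i => Finset.sum_insert hx
  simp only [inner, Finset.sum_add_distrib, lt_irrefl, if_false]
  have key : ∑ j ∈ s, (if x < j then f x j else 0) + ∑ i ∈ s, (if i < x then f i x else 0)
      = ∑ j ∈ s, f j x := by
    rw [← Finset.sum_add_distrib]
    apply Finset.sum_congr rfl
    intro j hj
    have hjx : j ≠ x := fun h => hx (h ▸ hj)
    rcases lt_or_gt_of_ne hjx with h | h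
    · rw [if_neg (not_lt_of_gt h), if_pos h, zero_add]
    · rw [if_pos h, if_neg (not_lt_of_gt h), add_zero, hf]
  linarith [key]

private lemma main_finset {ι : Type*} [LinearOrder ι] {p : ℝ} (hp1 : 1 ≤ p) (hp2 : p ≤ 2)
    (a : ι → ℝ) (ha : ∀ i, 0 ≤ a i) (s : Finset ι) :
    (∑ i ∈ s, a i) ^ p ≤ (∑ i ∈ s, a i ^ p)
      + ((2:ℝ) ^ p - 2) * ∑ i ∈ s, ∑ j ∈ s, (if i < j then (a i * a j) ^ (p / 2) else 0) := by
  classical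
  induction s using Finset.induction_on with
  | empty => simp [Real.zero_rpow (by linarith : p ≠ 0)]
  | @insert x s' hx ih =>
    have hc : (0:ℝ) ≤ (2:ℝ) ^ p - 2 := by
      have : (2:ℝ) ^ (1:ℝ) ≤ (2:ℝ) ^ p :=
        Real.rpow_le_rpow_of_exponent_le (by norm_num) hp1
      rw [Real.rpow_one] at this; linarith
    have hS : (0:ℝ) ≤ ∑ i ∈ s', a i := Finset.sum_nonneg fun i _ => ha i
    have h2v := two_var_s16 (a := a x) (b := ∑ i ∈ s', a i) hp1 hp2 (ha x) hS
    have hsub : ((∑ i ∈ s', a i)) ^ (p / 2) ≤ ∑ i ∈ s', a i ^ (p / 2) :=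
      sum_rpow_le (by linarith) (by linarith) s' a ha
    have hprod : (a x * ∑ i ∈ s', a i) ^ (p / 2) ≤ ∑ j ∈ s', (a j * a x) ^ (p / 2) := by
      rw [Real.mul_rpow (ha x) hS]
      calc a x ^ (p / 2) * (∑ i ∈ s', a i) ^ (p / 2)
          ≤ a x ^ (p / 2) * ∑ i ∈ s', a i ^ (p / 2) :=
            mul_le_mul_of_nonneg_left hsub (Real.rpow_nonneg (ha x) _)
        _ = ∑ j ∈ s', (a j * a x) ^ (p / 2) := by
            rw [Finset.mul_sum]
            exact Finset.sum_congr rfl fun j _ => by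
              rw [Real.mul_rpow (ha j) (ha x), mul_comm]
    rw [Finset.sum_insert hx, Finset.sum_insert hx,
      double_sum_insert (fun i j => (a i * a j) ^ (p / 2))
        (fun i j => by rw [mul_comm]) s' x hx]
    have := mul_le_mul_of_nonneg_left hprod hc
    nlinarith [mul_le_mul_of_nonneg_left hprod hc]

/-- Remark (pin), for `p ∈ [1,2]` and finitely many nonnegative reals:
`(∑_j a_j)^p ≤ ∑_j a_j^p + (2^p - 2) ∑_{i<j} (a_i a_j)^{p/2}`. -/
theorem statement16 (p : ℝ) (hp : p ∈ Set.Icc (1 : ℝ) 2)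
    (n : ℕ) (hn : 1 ≤ n) (a : Fin n → ℝ) (ha : ∀ i, 0 ≤ a i) :
    (∑ j, a j) ^ p ≤
      (∑ j, a j ^ p) +
        ((2 : ℝ) ^ p - 2) *
          ∑ i : Fin n, ∑ j : Fin n, if i < j then (a i * a j) ^ (p / 2) else 0 := by
  exact main_finset hp.1 hp.2 a ha Finset.univ
end
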